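/- arXiv:2211.08087 — 8 statements merged into one kernel-verified Lean document; each statement's English description precedes it below -/
import Mathlib

section
/- Let p be a prime and k ≥ 0 an integer. Let t_1, …, t_m be positive integers whose p-adic valuations satisfy ν_p(t_i) ≤ k for every i, with ν_p(t_i) = k for at least one i. Set m_l = #{i : ν_p(t_i) = l} for 0 ≤ l ≤ k and δ = ∑_{l=0}^k p^l·m_l − (p^k − 1). Then for all integers j ≥ 0 and n with n ≥ j + 1 + δ, the image of the polynomial (∏_{i=1}^m (1 − X^{t_i}))·(1 − X)^j under the quotient map ℤ[X] → ℤ[X]/(1 − X^{p^{k+1}}, (1 − X)^n) is nonzero. -/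
open Polynomial Finset

section aux

variable {K : Type*} [Field K] [CharZero K]

lemma abs_norm_one_sub' (x : K) :
    |Algebra.norm ℚ ((1 : K) - x)| = |Algebra.norm ℚ (x - 1)| := by
  have h : (1 : K) - x = algebraMap ℚ K (-1) * (x - 1) := by simp
  rw [h, map_mul, Algebra.norm_algebraMap, abs_mul, abs_pow, abs_neg, abs_one, one_pow, one_mul]

lemma aux_abs_norm (p : ℕ+) [hpri : Fact (p : ℕ).Prime] (k : ℕ)
    [IsCyclotomicExtension {(p : ℕ) ^ (k + 1)} ℚ K] {ζ : K}
    (hζ : IsPrimitiveRoot ζ ((p : ℕ) ^ (k + 1))) {s : ℕ} (hs : s ≤ k) :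
    |Algebra.norm ℚ (ζ ^ (p : ℕ) ^ s - 1)| = (p : ℚ) ^ (p : ℕ) ^ s := by
  have hirr : Irreducible (cyclotomic ((p : ℕ) ^ (k + 1)) ℚ) :=
    cyclotomic.irreducible_rat (pow_pos p.pos _)
  have hppos : (0:ℚ) < (p : ℚ) := by exact_mod_cast hpri.out.pos
  rcases Nat.eq_zero_or_pos k with hk | hk
  · subst hk
    have hs0 : s = 0 := Nat.le_zero.mp hs
    subst hs0
    simp only [pow_zero, pow_one]
    by_cases hp2 : p = 2
    · subst hp2
      have h2 : ((2 : ℕ+) ^ (0 + 1) : ℕ+) = (2 : ℕ+) := by norm_num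
      have hζ2 : IsPrimitiveRoot ζ 2 := by
        simpa using hζ
      have hz : ζ = -1 := hζ2.eq_neg_one_of_two_right
      have he : ζ - 1 = algebraMap ℚ K (-2) := by rw [hz]; simp; ring
      rw [he, Algebra.norm_algebraMap]
      have hfin : Module.finrank ℚ K = 1 := by
        rw [IsCyclotomicExtension.finrank (n := ((2:ℕ+):ℕ)^(0+1)) K hirr]
        simp
      rw [hfin]
      norm_num
    · rw [hζ.norm_sub_one_of_prime_ne_two hirr (fun h => hp2 (PNat.coe_injective h))]
      rw [abs_of_pos hppos]
  · rw [hζ.norm_pow_sub_one_eq_prime_pow_of_ne_zero hirr hs hk.ne']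
    rw [abs_of_pos (by positivity)]

lemma aux_abs_norm_factor (p : ℕ+) [hpri : Fact (p : ℕ).Prime] (k : ℕ)
    [IsCyclotomicExtension {(p : ℕ) ^ (k + 1)} ℚ K] {ζ : K}
    (hζ : IsPrimitiveRoot ζ ((p : ℕ) ^ (k + 1))) {t : ℕ} (ht : 0 < t)
    (hν : padicValNat (p : ℕ) t ≤ k) :
    |Algebra.norm ℚ ((1 : K) - ζ ^ t)| = (p : ℚ) ^ (p : ℕ) ^ padicValNat (p : ℕ) t := by
  set ν := padicValNat (p : ℕ) t with hνdef
  set u := t / (p : ℕ) ^ ν with hudef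
  have hdvd : (p : ℕ) ^ ν ∣ t := pow_padicValNat_dvd
  have h1 : (p : ℕ) ^ ν * u = t := Nat.mul_div_cancel' hdvd
  have hnd : ¬ (p : ℕ) ∣ u := by
    have := Nat.not_dvd_ordCompl hpri.out ht.ne'
    rwa [Nat.factorization_def _ hpri.out] at this
  have hcop : u.Coprime ((p : ℕ) ^ (k + 1)) := by
    have : u.Coprime (p : ℕ) := (hpri.out.coprime_iff_not_dvd.mpr hnd).symm
    simpa [PNat.pow_coe] using this.pow_right (k + 1)
  have hζu : IsPrimitiveRoot (ζ ^ u) ((p : ℕ) ^ (k + 1)) := hζ.pow_of_coprime u hcop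
  have h2 : ζ ^ t = (ζ ^ u) ^ (p : ℕ) ^ ν := by
    rw [← pow_mul, mul_comm, h1]
  rw [h2, abs_norm_one_sub', aux_abs_norm p k hζu hν]

end aux

/-- Lemma 4.1 of Crabb, "A Borsuk–Ulam theorem for cyclic p-groups".
Let `p` be a prime, `k ≥ 0`, and `t 1, …, t m` positive integers with `ν_p(t i) ≤ k` for all
`i` and `ν_p(t i) = k` for some `i`.  With `m_l = #{i : ν_p(t i) = l}` and
`δ = ∑_{l=0}^k p^l m_l − (p^k − 1)`, for all `j ≥ 0` and `n ≥ j + 1 + δ` the image of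
`(∏ i (1 − X^(t i))) (1 − X)^j` in `ℤ[X]/(1 − X^(p^(k+1)), (1 − X)^n)` is nonzero. -/
theorem stmt0 (p : ℕ) (hp : p.Prime) (k m : ℕ) (t : Fin m → ℕ)
    (ht : ∀ i, 0 < t i)
    (hle : ∀ i, padicValNat p (t i) ≤ k)
    (hex : ∃ i, padicValNat p (t i) = k)
    (j n : ℕ)
    (hn : (j : ℤ) + 1 +
        ((∑ l ∈ Finset.range (k + 1), (p : ℤ) ^ l *
            ((Finset.univ.filter fun i => padicValNat p (t i) = l).card : ℤ)) -
          ((p : ℤ) ^ k - 1)) ≤ (n : ℤ)) :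
    Ideal.Quotient.mk (Ideal.span {1 - (X : ℤ[X]) ^ p ^ (k + 1), (1 - X) ^ n})
      ((∏ i, (1 - X ^ t i)) * (1 - X) ^ j) ≠ 0 := by
  haveI : Fact p.Prime := ⟨hp⟩
  intro h0
  rw [Ideal.Quotient.eq_zero_iff_mem, Ideal.mem_span_pair] at h0
  obtain ⟨B, A, hBA⟩ := h0
  obtain ⟨i0, hi0⟩ := hex
  have hk0 : p ^ k ∣ t i0 := by rw [← hi0]; exact pow_padicValNat_dvd
  set pp : ℕ+ := ⟨p, hp.pos⟩ with hpp
  have hppco : ((pp : ℕ+) : ℕ) = p := rfl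
  haveI : Fact (Nat.Prime (pp : ℕ)) := ⟨hp⟩
  haveI : NeZero (p ^ (k + 1)) := ⟨pow_ne_zero _ hp.ne_zero⟩
  haveI : NeZero ((p ^ (k + 1) : ℕ) : ℚ) := ⟨by exact_mod_cast pow_ne_zero _ hp.ne_zero⟩
  haveI hcyc : IsCyclotomicExtension {p ^ (k + 1)} ℚ (CyclotomicField (p ^ (k + 1)) ℚ) :=
    CyclotomicField.isCyclotomicExtension _ _
  set K := CyclotomicField (p ^ (k + 1)) ℚ with hK
  haveI : IsCyclotomicExtension {(pp : ℕ) ^ (k + 1)} ℚ K := hcyc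
  haveI : CharZero K := charZero_of_injective_algebraMap (algebraMap ℚ K).injective
  set ζ : K := IsCyclotomicExtension.zeta (p ^ (k + 1)) ℚ K with hzdef
  have hζ : IsPrimitiveRoot ζ (p ^ (k + 1)) := IsCyclotomicExtension.zeta_spec _ _ _
  have hcoe : ((pp ^ (k + 1) : ℕ+) : ℕ) = p ^ (k + 1) := by
    rw [PNat.pow_coe, hppco]
  have hζ' : IsPrimitiveRoot ζ (p ^ (k + 1)) := hζ
  have hζq : ζ ^ p ^ (k + 1) = 1 := hζ'.pow_eq_one
  -- Step D: cyclotomic (p^(r+1)) ℚ divides A over ℚ, for r < k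
  set Aq : ℚ[X] := A.map (Int.castRingHom ℚ) with hAqdef
  have hdvdA : ∀ r ∈ Finset.range k, cyclotomic (p ^ (r + 1)) ℚ ∣ Aq := by
    intro r hr
    have hrk : r < k := Finset.mem_range.mp hr
    set η : K := ζ ^ p ^ (k - r) with hηdef
    have hηprim : IsPrimitiveRoot η (p ^ (r + 1)) :=
      hζ'.pow (pow_pos hp.pos _) (by rw [← pow_add]; congr 1; omega)
    have hηt : η ^ t i0 = 1 := by
      obtain ⟨v, hv⟩ := hk0
      have hd : p ^ (k + 1) ∣ p ^ (k - r) * t i0 := by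
        rw [hv, ← mul_assoc, ← pow_add]
        exact Dvd.dvd.mul_right (pow_dvd_pow p (by omega)) v
      obtain ⟨w, hw⟩ := hd
      rw [hηdef, ← pow_mul, hw, pow_mul, hζq, one_pow]
    have hηq : η ^ p ^ (k + 1) = 1 := by
      rw [hηdef, ← pow_mul, mul_comm, pow_mul, hζq, one_pow]
    have hF0 : aeval η ((∏ i, (1 - X ^ t i)) * (1 - X) ^ j : ℤ[X]) = 0 := by
      rw [map_mul, map_prod]
      apply mul_eq_zero_of_left
      apply Finset.prod_eq_zero (Finset.mem_univ i0)
      rw [map_sub, map_one, map_pow, aeval_X, hηt, sub_self]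
    have hev := congrArg (aeval η) hBA
    rw [map_add, map_mul, map_mul, map_sub, map_one, map_pow, aeval_X, hηq, sub_self,
      mul_zero, zero_add, hF0] at hev
    -- hev : aeval η A * aeval η ((1-X)^n) = 0
    have hηne : η ≠ 1 := hηprim.ne_one (Nat.one_lt_pow (Nat.succ_ne_zero r) hp.one_lt)
    have hA0 : aeval η A = 0 := by
      rcases mul_eq_zero.mp hev with h | h
      · exact h
      · exfalso
        apply hηne
        rw [map_pow, map_sub, map_one, aeval_X] at h
        have h1 : (1 : K) - η = 0 := (pow_eq_zero_iff'.mp h).1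
        exact (sub_eq_zero.mp h1).symm
    have hAq0 : aeval η Aq = 0 := by
      rw [hAqdef]
      have : (Int.castRingHom ℚ) = algebraMap ℤ ℚ := rfl
      rw [this, aeval_map_algebraMap, hA0]
    have := minpoly.dvd ℚ η hAq0
    rwa [← cyclotomic_eq_minpoly_rat hηprim (pow_pos hp.pos _)] at this
  -- Step E: descend divisibility to ℤ
  have hpair : (↑(Finset.range k) : Set ℕ).Pairwise
      (Function.onFun IsCoprime fun r => cyclotomic (p ^ (r + 1)) ℚ) := by
    intro r _ r' _ hne
    exact cyclotomic.isCoprime_rat fun h => hne (by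
      have := Nat.pow_right_injective hp.two_le h; omega)
  have hProdDvd : (∏ r ∈ Finset.range k, cyclotomic (p ^ (r + 1)) ℚ) ∣ Aq :=
    Finset.prod_dvd_of_coprime hpair hdvdA
  set Pz : ℤ[X] := ∏ r ∈ Finset.range k, cyclotomic (p ^ (r + 1)) ℤ with hPzdef
  have hPzmonic : Pz.Monic := monic_prod_of_monic _ _ fun r _ => cyclotomic.monic _ ℤ
  have hmod : A %ₘ Pz = 0 := by
    have h1 : (A %ₘ Pz).map (Int.castRingHom ℚ) = Aq %ₘ (Pz.map (Int.castRingHom ℚ)) :=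
      Polynomial.map_modByMonic _ hPzmonic
    have hPzmap : Pz.map (Int.castRingHom ℚ) = ∏ r ∈ Finset.range k, cyclotomic (p ^ (r + 1)) ℚ := by
      rw [Polynomial.map_prod]
      exact Finset.prod_congr rfl fun r _ => map_cyclotomic _ _
    rw [hPzmap] at h1
    have h2 : Aq %ₘ (∏ r ∈ Finset.range k, cyclotomic (p ^ (r + 1)) ℚ) = 0 :=
      (Polynomial.modByMonic_eq_zero_iff_dvd
        (monic_prod_of_monic _ _ fun r _ => cyclotomic.monic _ ℚ)).mpr hProdDvd
    rw [h2] at h1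
    exact (Polynomial.map_eq_zero_iff Int.cast_injective).mp h1
  set Cz : ℤ[X] := A /ₘ Pz with hCdef
  have hA : Pz * Cz = A := by
    have h3 := Polynomial.modByMonic_add_div A Pz
    rwa [hmod, zero_add] at h3
  have hXPz : (X - 1 : ℤ[X]) * Pz = X ^ p ^ k - 1 := by
    rw [hPzdef, ← prod_cyclotomic_eq_X_pow_sub_one (pow_pos hp.pos k) ℤ,
      Nat.divisors_prime_pow hp, Finset.prod_map, Finset.prod_range_succ']
    simp only [Function.Embedding.coeFn_mk, pow_zero, cyclotomic_one]
    ring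
  have hid : (X - 1 : ℤ[X]) * A = (X ^ p ^ k - 1) * Cz := by
    rw [← hA, ← hXPz]; ring
  -- Step F: evaluate at ζ
  have e1 : (∏ i, (1 - ζ ^ t i)) * (1 - ζ) ^ j = aeval ζ A * (1 - ζ) ^ n := by
    have hev := congrArg (aeval ζ) hBA
    simp only [map_add, map_mul, map_sub, map_one, map_pow, map_prod, aeval_X, hζq,
      sub_self, mul_zero, zero_add] at hev
    exact hev.symm
  have e2 : (ζ - 1) * aeval ζ A = (ζ ^ p ^ k - 1) * aeval ζ Cz := by
    have hev := congrArg (aeval ζ) hid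
    simpa only [map_mul, map_sub, map_one, map_pow, aeval_X] using hev
  have combined : (ζ - 1) * ((∏ i, (1 - ζ ^ t i)) * (1 - ζ) ^ j)
      = (ζ ^ p ^ k - 1) * aeval ζ Cz * (1 - ζ) ^ n := by
    linear_combination (ζ - 1) * e1 + (1 - ζ) ^ n * e2
  -- Step G: take absolute norms
  haveI := IsCyclotomicExtension.finiteDimensional {p ^ (k + 1)} ℚ K
  have hnorm := congrArg (fun x : K => |Algebra.norm ℚ x|) combined
  simp only [map_mul, map_pow, map_prod, abs_mul, abs_pow, Finset.abs_prod] at hnorm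
  have hnζ1 : |Algebra.norm ℚ (ζ - 1)| = (p : ℚ) := by
    have h4 := aux_abs_norm pp k hζ (Nat.zero_le k)
    simpa [hppco] using h4
  have hn1ζ : |Algebra.norm ℚ ((1:K) - ζ)| = (p : ℚ) := by
    rw [abs_norm_one_sub']; exact hnζ1
  have hnpk : |Algebra.norm ℚ (ζ ^ p ^ k - 1)| = (p : ℚ) ^ p ^ k := by
    have h5 := aux_abs_norm pp k hζ (le_refl k)
    simpa [hppco] using h5
  have hprod : (∏ i, |Algebra.norm ℚ ((1:K) - ζ ^ t i)|)
      = ∏ i : Fin m, (p:ℚ) ^ p ^ padicValNat p (t i) :=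
    Finset.prod_congr rfl (fun i _ =>
      by simpa [hppco] using aux_abs_norm_factor pp k hζ (ht i) (hle i))
  rw [hnζ1, hn1ζ, hnpk, hprod, Finset.prod_pow_eq_pow_sum] at hnorm
  -- hnorm : p * ((p)^T * p^j) = p^{p^k} * |norm Cζ| * p^n
  set T : ℕ := ∑ i, p ^ padicValNat p (t i) with hTdef
  -- integrality of the norm of Cζ
  have hζint : IsIntegral ℤ ζ := by
    refine ⟨X ^ p ^ (k + 1) - 1, ?_, ?_⟩
    · have h6 := monic_X_pow_sub_C (1 : ℤ) (pow_pos hp.pos (k + 1)).ne'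
      simpa using h6
    · simp [hζq]
  have hCint : IsIntegral ℤ (aeval ζ Cz) :=
    adjoin_le_integralClosure hζint (aeval_mem_adjoin_singleton _ _)
  obtain ⟨c, hc⟩ := IsIntegrallyClosed.isIntegral_iff.mp
    (Algebra.isIntegral_norm (R := ℤ) ℚ hCint)
  rw [show algebraMap ℤ ℚ c = (c : ℚ) from rfl] at hc
  rw [← hc] at hnorm
  have habs : |(c : ℚ)| = ((c.natAbs : ℕ) : ℚ) := by
    rw [Nat.cast_natAbs, Int.cast_abs]
  rw [habs] at hnorm
  have key : (p:ℚ) ^ (1 + T + j) = (p:ℚ) ^ (p ^ k + n) * ((c.natAbs : ℕ) : ℚ) := by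
    rw [pow_add, pow_add, pow_add]

    linear_combination hnorm
  have keyN : p ^ (1 + T + j) = p ^ (p ^ k + n) * c.natAbs := by exact_mod_cast key
  have hdvd2 : p ^ (p ^ k + n) ∣ p ^ (1 + T + j) := ⟨c.natAbs, keyN⟩
  have hle2 : p ^ k + n ≤ 1 + T + j := (Nat.pow_dvd_pow_iff_le_right hp.one_lt).mp hdvd2
  -- identify T with the sum in the hypothesis
  have hTsum : (∑ l ∈ Finset.range (k + 1), (p : ℤ) ^ l *
      ((Finset.univ.filter fun i => padicValNat p (t i) = l).card : ℤ)) = (T : ℤ) := by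
    rw [hTdef]
    push_cast
    rw [← Finset.sum_fiberwise_of_maps_to (g := fun i => padicValNat p (t i))
        (t := Finset.range (k + 1))
        (fun i _ => Finset.mem_range.mpr (Nat.lt_succ_of_le (hle i)))
        (fun i => (p:ℤ) ^ padicValNat p (t i))]
    refine Finset.sum_congr rfl fun l hl => ?_
    rw [Finset.sum_congr rfl (fun i hi => by rw [(Finset.mem_filter.mp hi).2]),
      Finset.sum_const, nsmul_eq_mul, mul_comm]
  rw [hTsum] at hn
  have hle2' : (p:ℤ) ^ k + (n:ℤ) ≤ 1 + (T:ℤ) + (j:ℤ) := by exact_mod_cast hle2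
  linarith
end

section
/- Let p be a prime and k ≥ 0 an integer, and write Φ(X) = ∑_{i=0}^{p−1} X^{i·p^k} ∈ ℤ[X], so that 1 − X^{p^{k+1}} = (1 − X^{p^k})·Φ(X). Let e_0, …, e_k and j be nonnegative integers. Then the image of the polynomial (∏_{l=0}^k (1 − X^{p^l})^{e_l})·(1 − X)^j in the quotient ring ℤ_(p)[X]/(Φ(X), (1 − X)^{j + ∑_{l=0}^k e_l·p^l + 1}) is nonzero. -/
open Polynomial Finset

/-- The ideal `(p) ⊆ ℤ` is prime when `p` is a natural prime. -/
instance intSpanNatPrime (p : ℕ) [hp : Fact p.Prime] : (Ideal.span {(p : ℤ)}).IsPrime :=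
  (Ideal.span_singleton_prime (by exact_mod_cast hp.out.ne_zero)).mpr
    (Nat.prime_iff_prime_int.mp hp.out)

/-- `ℤ_(p)`: the localization of `ℤ` at the prime ideal `(p)`. -/
abbrev IntLocAtPrime (p : ℕ) [Fact p.Prime] : Type :=
  Localization.AtPrime (Ideal.span {(p : ℤ)})

lemma dvd_of_map_zmod_eq_zero {p : ℕ} [Fact p.Prime] (f : ℤ[X])
    (h : f.map (Int.castRingHom (ZMod p)) = 0) : (C (p:ℤ)) ∣ f := by
  rw [Polynomial.C_dvd_iff_dvd_coeff]
  intro i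
  have h2 : ((f.coeff i : ℤ) : ZMod p) = 0 := by
    have := congrArg (fun g => Polynomial.coeff g i) h
    simpa [Polynomial.coeff_map] using this
  exact (ZMod.intCast_zmod_eq_zero_iff_dvd _ p).mp h2

lemma L1 {p : ℕ} [hp : Fact p.Prime] (n : ℕ) :
    (C (p:ℤ)) ∣ ((1 - X^(p^n)) - (1-X)^(p^n)) := by
  apply dvd_of_map_zmod_eq_zero
  simp only [Polynomial.map_sub, Polynomial.map_pow, Polynomial.map_one, map_X]
  rw [sub_pow_char_pow]
  ring

lemma L2 {p : ℕ} [hp : Fact p.Prime] (k : ℕ) :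
    (C (p:ℤ)) ∣ ((∑ i ∈ range p, X^(i*p^k)) - (X-1)^((p-1)*p^k)) := by
  apply dvd_of_map_zmod_eq_zero
  rw [Polynomial.map_sub, Polynomial.map_sum, Polynomial.map_pow, Polynomial.map_sub, map_X,
    Polynomial.map_one]
  simp only [Polynomial.map_pow, map_X]
  have ht : (X:(ZMod p)[X])^(p^k) - 1 ≠ 0 := by
    simpa using X_pow_sub_C_ne_zero (pow_pos hp.out.pos k) (1 : ZMod p)
  have key : (∑ i ∈ range p, ((X:(ZMod p)[X])^(p^k))^i) = ((X:(ZMod p)[X])^(p^k) - 1)^(p-1) := by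
    apply mul_right_cancel₀ ht
    rw [geom_sum_mul, ← pow_succ, Nat.sub_add_cancel hp.out.one_lt.le]
    rw [sub_pow_char, one_pow]
  have h1 : (∑ i ∈ range p, (X:(ZMod p)[X])^(i*p^k)) = ∑ i ∈ range p, ((X:(ZMod p)[X])^(p^k))^i :=
    Finset.sum_congr rfl (fun i _ => by rw [mul_comm, pow_mul])
  have h2 : ((X:(ZMod p)[X])-1)^((p-1)*p^k) = ((X:(ZMod p)[X])^(p^k) - 1)^(p-1) := by
    rw [mul_comm, pow_mul, sub_pow_char_pow, one_pow]
  rw [h1, key, h2, sub_self]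

set_option maxHeartbeats 1000000 in
/-- the reduced non-vanishing claim in the proof of Lemma 4.1:
with `Φ(X) = ∑_{i<p} X^(i p^k)`, for nonnegative integers `e 0, …, e k` and `j`, the image of
`(∏_{l≤k} (1 − X^(p^l))^(e l)) (1 − X)^j` in
`ℤ_(p)[X]/(Φ, (1 − X)^(j + ∑_{l≤k} e l · p^l + 1))` is nonzero. -/
theorem stmt2 (p : ℕ) [hp : Fact p.Prime] (k : ℕ) (e : ℕ → ℕ) (j : ℕ) :
    Ideal.Quotient.mk
        (Ideal.span
          {(∑ i ∈ Finset.range p, (X : (IntLocAtPrime p)[X]) ^ (i * p ^ k)),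
            (1 - X) ^ (j + (∑ l ∈ Finset.range (k + 1), e l * p ^ l) + 1)})
      ((∏ l ∈ Finset.range (k + 1), (1 - X ^ p ^ l) ^ e l) * (1 - X) ^ j) ≠ 0 := by
  intro hF0
  set R := IntLocAtPrime p with hR
  -- basic facts about p in R
  have hpR_nonunit : ¬ IsUnit ((p : ℕ) : R) := by
    intro hu
    have h := (IsLocalization.AtPrime.isUnit_to_map_iff R (Ideal.span {(p:ℤ)}) ((p:ℤ)))
    have hcast : ((p:ℤ) : R) = algebraMap ℤ R (p:ℤ) := by simp [algebraMap_int_eq, eq_intCast]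
    have h2 : (p:ℤ) ∈ (Ideal.span {(p:ℤ)}).primeCompl := h.mp (by rw [← hcast]; exact_mod_cast hu)
    exact h2 (Ideal.mem_span_singleton_self _)
  have hpR0 : ((p : ℕ) : R) ≠ 0 := by
    have hinj : Function.Injective (algebraMap ℤ R) := by
      apply IsLocalization.injective (M := (Ideal.span {(p:ℤ)}).primeCompl)
      intro x hx
      refine mem_nonZeroDivisors_of_ne_zero ?_
      rintro rfl
      exact hx (Ideal.zero_mem _)
    intro h0
    have : algebraMap ℤ R (p:ℤ) = algebraMap ℤ R 0 := by
      simpa [algebraMap_int_eq, eq_intCast] using h0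
    exact hp.out.ne_zero (by exact_mod_cast hinj this)
  set d := (p-1)*p^k with hd
  have hd1 : 1 ≤ d := by
    have h2 := hp.out.two_le
    have h1 : 1 ≤ p - 1 := by omega
    have : 0 < (p-1)*p^k := by positivity
    omega
  set E := ∑ l ∈ Finset.range (k+1), e l * p^l with hE
  set N := j + E with hN
  set Φ : R[X] := ∑ i ∈ Finset.range p, X ^ (i * p ^ k) with hΦdef
  set I : Ideal R[X] := Ideal.span {Φ, (1-X)^(N+1)} with hI
  set q : R[X] →+* R[X] ⧸ I := Ideal.Quotient.mk I with hq
  set z : R[X] ⧸ I := q (1 - X) with hzdef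
  have hΦ0 : q Φ = 0 := Ideal.Quotient.eq_zero_iff_mem.mpr (Ideal.subset_span (by simp))
  have hzN1 : z ^ (N+1) = 0 := by
    rw [hzdef, ← map_pow]
    exact Ideal.Quotient.eq_zero_iff_mem.mpr (Ideal.subset_span (by simp))
  have hznil : IsNilpotent z := ⟨N+1, hzN1⟩
  have hnil_mul : ∀ a : R[X] ⧸ I, IsNilpotent (z * a) := fun a =>
    (Commute.all z a).isNilpotent_mul_right hznil
  set θ : ℤ[X] →+* R[X] := Polynomial.mapRingHom (algebraMap ℤ R) with hθ
  have hqX1 : q ((X:R[X]) - 1) = -z := by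
    rw [hzdef, ← map_neg]; ring_nf
  -- Step A : Φ = (X-1)^d + p * W in R[X], with W = 1 + (X-1) * V
  obtain ⟨W₀, hW₀⟩ := L2 (p := p) k
  set W : R[X] := θ W₀ with hW
  have hWR : Φ = (X-1)^d + ((p:ℕ) : R[X]) * W := by
    have h := congrArg θ hW₀
    simp only [hθ, coe_mapRingHom, Polynomial.map_sub, Polynomial.map_mul, Polynomial.map_pow,
      Polynomial.map_sum, Polynomial.map_one, map_X, Polynomial.map_C, algebraMap_int_eq,
      eq_intCast, Int.cast_natCast, Polynomial.C_eq_natCast, Polynomial.map_natCast,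
      Polynomial.map_intCast] at h
    rw [Polynomial.map_sub, Polynomial.map_sum] at h
    simp only [Polynomial.map_pow, Polynomial.map_sub, map_X, Polynomial.map_one] at h
    rw [hΦdef]
    rw [sub_eq_iff_eq_add] at h
    rw [h, hW, hθ]
    simp only [coe_mapRingHom]
    ring
  have hWeval : W.eval 1 = 1 := by
    have h := congrArg (Polynomial.eval (1:R)) hWR
    simp only [eval_add, eval_mul, eval_pow, eval_sub, eval_one, eval_X, eval_natCast,
      hΦdef, eval_finset_sum, one_pow, sub_self, Finset.sum_const, card_range,
      nsmul_eq_mul, mul_one] at h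
    rw [zero_pow (by omega), zero_add] at h
    exact (mul_left_cancel₀ hpR0 (by rw [← h, mul_one])).symm
  obtain ⟨V, hV⟩ : (X - C 1) ∣ (W - 1) := by
    rw [dvd_iff_isRoot]
    simp [IsRoot, hWeval]
  have hWform : W = 1 + (X - 1) * V := by
    rw [C_1] at hV
    linear_combination hV
  have hWunit : IsUnit (q W) := by
    have h1 : q W = 1 + z * (-(q V)) := by
      rw [hWform, map_add, map_mul, map_one, hqX1]; ring
    rw [h1]
    exact (hnil_mul (-(q V))).isUnit_one_add
  -- p = z^d * t in the quotient
  obtain ⟨t, ht⟩ : ∃ t : R[X] ⧸ I, ((p:ℕ) : R[X] ⧸ I) = z^d * t := by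
    have h := congrArg q hWR
    rw [hΦ0, map_add, map_mul, map_pow, map_natCast, hqX1] at h
    obtain ⟨w, hw⟩ := hWunit
    refine ⟨(-1)^(d+1) * ↑w⁻¹, ?_⟩
    have hpq : ((p:ℕ) : R[X] ⧸ I) * q W = -(-z)^d := by linear_combination -h
    calc ((p:ℕ) : R[X] ⧸ I) = ((p:ℕ) : R[X] ⧸ I) * (↑w * ↑w⁻¹) := by
          rw [Units.mul_inv, mul_one]
      _ = (((p:ℕ) : R[X] ⧸ I) * q W) * ↑w⁻¹ := by rw [hw]; ring
      _ = -(-z)^d * ↑w⁻¹ := by rw [hpq]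
      _ = z^d * ((-1)^(d+1) * ↑w⁻¹) := by ring
  -- Step B : each 1 - X^(p^l) is z^(p^l) times a unit
  have hfac : ∀ l : ℕ, ∃ c : R[X] ⧸ I, IsNilpotent c ∧
      (l ≤ k → q (1 - X^(p^l)) = z^(p^l) * (1 + c)) := by
    intro l
    by_cases hlk : l ≤ k
    swap
    · exact ⟨0, ⟨1, pow_one _⟩, fun h => absurd h hlk⟩
    obtain ⟨G₀, hG₀⟩ := L1 (p := p) l
    set G : R[X] := θ G₀ with hG
    have hGR : (1 - X^(p^l) : R[X]) = (1-X)^(p^l) + ((p:ℕ) : R[X]) * G := by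
      have h := congrArg θ hG₀
      simp only [hθ, coe_mapRingHom, Polynomial.map_sub, Polynomial.map_mul, Polynomial.map_pow,
        Polynomial.map_one, map_X, Polynomial.map_C, algebraMap_int_eq,
        eq_intCast, Int.cast_natCast, Polynomial.C_eq_natCast, Polynomial.map_natCast,
        Polynomial.map_intCast] at h
      rw [sub_eq_iff_eq_add] at h
      rw [h, hG, hθ]
      simp only [coe_mapRingHom]
      ring
    have hGeval : G.eval 1 = 0 := by
      have h := congrArg (Polynomial.eval (1:R)) hGR
      simp only [eval_add, eval_mul, eval_pow, eval_sub, eval_one, eval_X, eval_natCast,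
        one_pow, sub_self] at h
      rw [zero_pow (pow_pos hp.out.pos l).ne', zero_add, eq_comm, mul_eq_zero] at h
      exact h.resolve_left hpR0
    obtain ⟨g, hg⟩ : (X - C 1) ∣ G := by
      rw [dvd_iff_isRoot]
      simp [IsRoot, hGeval]
    have hple : p^l ≤ d := by
      have h1 : p^l ≤ p^k := Nat.pow_le_pow_right hp.out.pos hlk
      have h2 : p^k ≤ (p-1)*p^k := Nat.le_mul_of_pos_left _ (by have := hp.out.two_le; omega)
      omega
    refine ⟨-(z * (z^(d - p^l) * (t * q g))), (hnil_mul _).neg, fun _ => ?_⟩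
    have hadd : p^l + (d - p^l) = d := Nat.add_sub_cancel' hple
    have hzd : z^d = z^(p^l) * z^(d - p^l) := by rw [← pow_add z, hadd]
    rw [C_1] at hg
    have hqG : q G = -z * q g := by rw [hg, map_mul, hqX1]
    have h := congrArg q hGR
    rw [map_add, map_pow, map_mul, map_natCast, ← hzdef, hqG, ht, hzd] at h
    rw [h]
    ring
  choose c hcnil hceq using hfac
  -- the image of F is z^N times a unit
  have hterm : ∀ l ∈ Finset.range (k+1),
      q ((1 - X^(p^l))^(e l)) = z^(e l * p^l) * (1 + c l)^(e l) := by
    intro l hl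
    rw [map_pow, hceq l (by simpa using Nat.lt_succ_iff.mp (Finset.mem_range.mp hl)),
      mul_pow (M := R[X] ⧸ I), ← pow_mul z, mul_comm (p^l) (e l)]
  have hU : IsUnit (∏ l ∈ Finset.range (k+1), (1 + c l)^(e l)) := by
    refine Finset.prod_induction _ IsUnit (fun a b ha hb => ha.mul hb) isUnit_one ?_
    exact fun l _ => ((hcnil l).isUnit_one_add).pow (e l)
  have hzN : z^N = 0 := by
    rw [map_mul, map_prod, map_pow, ← hzdef, Finset.prod_congr rfl hterm,
      Finset.prod_mul_distrib, Finset.prod_pow_eq_pow_sum, ← hE] at hF0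
    have h : z^N * (∏ l ∈ Finset.range (k+1), (1 + c l)^(e l)) = 0 := by
      rw [hN, pow_add]
      calc z^j * z^E * ∏ l ∈ Finset.range (k+1), (1 + c l)^(e l)
          = z ^ E * (∏ l ∈ Finset.range (k+1), (1 + c l)^(e l)) * z ^ j := by ring
        _ = 0 := hF0
    exact (hU.mul_left_eq_zero (a := z^N)).mp h
  -- hence (1-X)^N lies in the ideal; derive a contradiction
  have hmem : ((1-X : R[X]))^N ∈ I := by
    rw [← Ideal.Quotient.eq_zero_iff_mem]
    calc Ideal.Quotient.mk I ((1-X : R[X])^N) = z^N := by rw [← hq, map_pow, ← hzdef]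
      _ = 0 := hzN
  rw [hI, Ideal.mem_span_pair] at hmem
  obtain ⟨a, b, hab⟩ := hmem
  set π : R[X] := X - C 1 with hπdef
  have hπ : Prime π := prime_X_sub_C 1
  have h1X : (1 - X : R[X]) = -π := by rw [hπdef, C_1]; ring
  have hΦeval : Φ.eval 1 = ((p:ℕ) : R) := by
    simp [hΦdef, eval_finset_sum]
  have hπΦ : ¬ π ∣ Φ := by
    rw [hπdef, dvd_iff_isRoot]
    intro hroot
    rw [IsRoot, hΦeval] at hroot
    exact hpR0 hroot
  have h1XN : ∀ m : ℕ, ((1-X : R[X]))^m = (-1)^m * π^m := fun m => by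
    rw [h1X, neg_pow π m]
  have hdvd : π^N ∣ a * Φ := by
    refine ⟨(-1)^N * (1 - b * (1-X)), ?_⟩
    have h : a * Φ = (1-X)^N - b*(1-X)^(N+1) := by linear_combination hab
    rw [h, h1XN N, h1XN (N+1), h1X]
    ring
  obtain ⟨a₁, ha₁⟩ := hπ.pow_dvd_of_dvd_mul_right N hπΦ hdvd
  have key : π^N * (a₁ * Φ) = π^N * ((-1)^N * (1 - b*(1-X))) := by
    calc π^N * (a₁ * Φ) = a * Φ := by rw [ha₁]; ring
      _ = (1-X)^N - b*(1-X)^(N+1) := by linear_combination hab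
      _ = π^N * ((-1)^N * (1 - b*(1-X))) := by rw [h1XN N, h1XN (N+1), h1X]; ring
  have hcancel : a₁ * Φ = (-1)^N * (1 - b*(1-X)) :=
    mul_left_cancel₀ (pow_ne_zero N hπ.ne_zero) key
  have heval : a₁.eval 1 * ((p:ℕ) : R) = (-1)^N := by
    have h := congrArg (Polynomial.eval (1:R)) hcancel
    simpa [hΦeval] using h
  refine hpR_nonunit (IsUnit.of_mul_eq_one (a₁.eval 1 * (-1)^N) ?_)
  calc ((p:ℕ):R) * (a₁.eval 1 * (-1)^N) = (a₁.eval 1 * ((p:ℕ):R)) * (-1)^N := by ring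
    _ = (-1:R)^N * (-1)^N := by rw [heval]
    _ = ((-1:R) * (-1))^N := (mul_pow _ _ _).symm
    _ = 1 := by norm_num
end

section
/- Let p be a prime and k ≥ 0 an integer, and write Φ(X) = ∑_{i=0}^{p−1} X^{i·p^k} ∈ ℤ[X]. Then for every integer l with 0 ≤ l ≤ k there exists a polynomial a ∈ ℤ[X] such that (1 − X^{p^l})^{(p−1)·p^{k−l}} = −p·(1 + (1 − X)·a(X)) + Φ(X) in ℤ[X]. -/
open Polynomial Finset

/-- identity (a) in the proof of Lemma 4.1: with
`Φ(X) = ∑_{i<p} X^(i p^k)`, for every `0 ≤ l ≤ k` there is `a ∈ ℤ[X]` with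
`(1 − X^(p^l))^((p−1) p^(k−l)) = −p (1 + (1 − X) a(X)) + Φ(X)` in `ℤ[X]`. -/
theorem stmt3 (p : ℕ) (hp : p.Prime) (k : ℕ) :
    ∀ l : ℕ, l ≤ k →
      ∃ a : ℤ[X],
        (1 - (X : ℤ[X]) ^ p ^ l) ^ ((p - 1) * p ^ (k - l)) =
          -(p : ℤ[X]) * (1 + (1 - X) * a) + ∑ i ∈ Finset.range p, X ^ (i * p ^ k) := by
  intro l hl
  haveI : Fact p.Prime := ⟨hp⟩
  set Φ : ℤ[X] := ∑ i ∈ Finset.range p, X ^ (i * p ^ k) with hΦ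
  set f : ℤ[X] := (1 - (X : ℤ[X]) ^ p ^ l) ^ ((p - 1) * p ^ (k - l)) - Φ with hf
  -- the image of `f` in `(ZMod p)[X]` vanishes
  have hmap : f.map (Int.castRingHom (ZMod p)) = 0 := by
    have hid : ((1 : (ZMod p)[X]) - X ^ p ^ l) ^ ((p - 1) * p ^ (k - l))
        = ∑ i ∈ Finset.range p, (X : (ZMod p)[X]) ^ (i * p ^ k) := by
      set Y : (ZMod p)[X] := X ^ p ^ k with hY
      have hne : (1 : (ZMod p)[X]) - Y ≠ 0 := by
        intro h
        have h0 := congrArg (Polynomial.eval 0) h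
        simp [hY, zero_pow (pow_ne_zero k hp.ne_zero)] at h0
      have key : ((1 : (ZMod p)[X]) - Y) ^ (p - 1) = ∑ i ∈ Finset.range p, Y ^ i := by
        apply mul_left_cancel₀ hne
        have h1 : (1 - Y) * (1 - Y) ^ (p - 1) = (1 - Y) ^ p := by
          rw [← pow_succ', Nat.sub_add_cancel hp.one_le]
        have h2 : ((1 : (ZMod p)[X]) - Y) ^ p = 1 - Y ^ p := by
          simpa using sub_pow_char (p := p) (1 : (ZMod p)[X]) Y
        have h3 : (1 - Y) * ∑ i ∈ Finset.range p, Y ^ i = 1 - Y ^ p := by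
          have hg := geom_sum_mul Y p
          have hrw : (1 - Y) * ∑ i ∈ Finset.range p, Y ^ i
              = -((∑ i ∈ Finset.range p, Y ^ i) * (Y - 1)) := by ring
          rw [hrw, hg]; ring
        rw [h1, h2, h3]
      have hx : ((1 : (ZMod p)[X]) - X ^ p ^ l) = (1 - X) ^ p ^ l := by
        simpa using (sub_pow_char_pow (p := p) (1 : (ZMod p)[X]) X l).symm
      have hxk : ((1 : (ZMod p)[X]) - X) ^ p ^ k = 1 - Y := by
        simpa [hY] using sub_pow_char_pow (p := p) (1 : (ZMod p)[X]) X k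
      calc ((1 : (ZMod p)[X]) - X ^ p ^ l) ^ ((p - 1) * p ^ (k - l))
          = ((1 - X) ^ p ^ l) ^ ((p - 1) * p ^ (k - l)) := by rw [hx]
        _ = ((1 - X) ^ p ^ k) ^ (p - 1) := by
            rw [← pow_mul, ← pow_mul]
            congr 1
            have h : p ^ l * p ^ (k - l) = p ^ k := by
              rw [← pow_add]; congr 1; omega
            calc p ^ l * ((p - 1) * p ^ (k - l))
                = p ^ l * p ^ (k - l) * (p - 1) := by ring
              _ = p ^ k * (p - 1) := by rw [h]
        _ = (1 - Y) ^ (p - 1) := by rw [hxk]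
        _ = ∑ i ∈ Finset.range p, Y ^ i := key
        _ = ∑ i ∈ Finset.range p, (X : (ZMod p)[X]) ^ (i * p ^ k) := by
            exact Finset.sum_congr rfl fun i _ => by
              rw [hY, mul_comm i (p ^ k), pow_mul]
    rw [hf, hΦ]
    simp only [Polynomial.map_sub, Polynomial.map_pow, Polynomial.map_sum,
      Polynomial.map_one, Polynomial.map_X]
    rw [hid, sub_self]
  -- hence `p` divides `f`
  have hdvd : (C (p : ℤ)) ∣ f := by
    rw [Polynomial.C_dvd_iff_dvd_coeff]
    intro i
    have h0 : ((f.coeff i : ℤ) : ZMod p) = 0 := by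
      have := congrArg (fun q => Polynomial.coeff q i) hmap
      simpa using this
    exact_mod_cast (ZMod.intCast_zmod_eq_zero_iff_dvd _ p).mp h0
  obtain ⟨b, hb⟩ := hdvd
  -- evaluation at 1
  have heval : f.eval 1 = -(p : ℤ) := by
    have hexp : (p - 1) * p ^ (k - l) ≠ 0 := by
      have h2 := hp.two_le
      have : p - 1 ≠ 0 := by omega
      positivity
    simp [hf, hΦ, zero_pow hexp, Polynomial.eval_finset_sum]
  have hp0 : (p : ℤ) ≠ 0 := by exact_mod_cast hp.ne_zero
  have hbeval : b.eval 1 = -1 := by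
    have h := congrArg (Polynomial.eval 1) hb
    rw [heval] at h
    simp only [Polynomial.eval_mul, Polynomial.eval_C] at h
    have h' : (p : ℤ) * b.eval 1 = (p : ℤ) * (-1) := by linarith
    exact mul_left_cancel₀ hp0 h'
  -- `X - 1` divides `b + 1`
  have hroot : (X - C (1 : ℤ)) ∣ (b + 1) := by
    rw [Polynomial.dvd_iff_isRoot]
    simp [Polynomial.IsRoot, hbeval]
  obtain ⟨c, hc⟩ := hroot
  refine ⟨c, ?_⟩
  have hfb : (1 - (X : ℤ[X]) ^ p ^ l) ^ ((p - 1) * p ^ (k - l)) = C (p : ℤ) * b + Φ := by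
    rw [← hb, hf]; ring
  have hbc : b = (X - 1) * c - 1 := by
    have h := hc
    simp only [map_one] at h
    linear_combination h
  rw [hfb, hbc, hΦ]
  simp only [Polynomial.C_eq_natCast]
  ring
end

section
/- Let p be a prime and k ≥ 0 an integer, and write Φ(X) = ∑_{i=0}^{p−1} X^{i·p^k} ∈ ℤ[X]. Then for every integer l with 0 ≤ l ≤ k and every integer n ≥ 1, in the quotient ring ℤ_(p)[X]/(Φ(X), (1 − X)^n) the image of p lies in the principal ideal generated by the image of 1 − X^{p^l}. -/
open Polynomial Finset

lemma charp_key (p : ℕ) [hp : Fact p.Prime] (k l : ℕ) (hl : l ≤ k) :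
    ((1 : (ZMod p)[X]) - X ^ p ^ l) ^ ((p - 1) * p ^ (k - l)) =
      ∑ i ∈ Finset.range p, (X : (ZMod p)[X]) ^ (i * p ^ k) := by
  haveI : CharP ((ZMod p)[X]) p := Polynomial.instCharP p
  have h1 : ((1 : (ZMod p)[X]) - X ^ p ^ l) = (1 - X) ^ p ^ l := by
    rw [sub_pow_char_pow, one_pow]
  have hYne : (X : (ZMod p)[X]) ^ p ^ k - 1 ≠ 0 := by
    intro h
    have := congrArg (Polynomial.eval 0) h
    simp [zero_pow (pow_ne_zero k hp.out.ne_zero)] at this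
  have hneg1 : ((-1 : (ZMod p)[X])) ^ (p - 1) = 1 := by
    rcases hp.out.eq_two_or_odd' with h | h
    · subst h
      haveI : CharP ((ZMod 2)[X]) 2 := Polynomial.instCharP 2
      rw [CharTwo.neg_eq]; simp
    · exact (Nat.Odd.sub_odd h odd_one).neg_one_pow
  have hgeom : ((1 : (ZMod p)[X]) - X ^ p ^ k) ^ (p - 1) =
      ∑ i ∈ Finset.range p, ((X : (ZMod p)[X]) ^ p ^ k) ^ i := by
    apply mul_right_cancel₀ hYne
    rw [geom_sum_mul,
      show ((X:(ZMod p)[X])^p^k)^p - 1 = ((X:(ZMod p)[X])^p^k - 1)^p from by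
        rw [sub_pow_char, one_pow]]
    have : ((1 : (ZMod p)[X]) - X ^ p ^ k) ^ (p - 1)
        = ((X : (ZMod p)[X]) ^ p ^ k - 1) ^ (p - 1) := by
      rw [show ((1 : (ZMod p)[X]) - X ^ p ^ k) = -((X:(ZMod p)[X]) ^ p ^ k - 1) by ring,
        neg_pow, hneg1, one_mul]
    rw [this, ← pow_succ, Nat.sub_add_cancel hp.out.one_lt.le]
  calc ((1 : (ZMod p)[X]) - X ^ p ^ l) ^ ((p - 1) * p ^ (k - l))
      = ((1 - X) ^ p ^ l) ^ ((p - 1) * p ^ (k - l)) := by rw [h1]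
    _ = ((1 - X) ^ p ^ k) ^ (p - 1) := by
        rw [← pow_mul, ← pow_mul]
        congr 1
        rw [show p ^ l * ((p - 1) * p ^ (k - l)) = (p ^ l * p ^ (k-l)) * (p-1) by ring,
          ← pow_add, Nat.add_sub_cancel' hl]
    _ = ((1 : (ZMod p)[X]) - X ^ p ^ k) ^ (p - 1) := by rw [sub_pow_char_pow, one_pow]
    _ = ∑ i ∈ Finset.range p, (X : (ZMod p)[X]) ^ (i * p ^ k) := by
        rw [hgeom]
        refine Finset.sum_congr rfl fun i _ => ?_
        rw [← pow_mul, mul_comm]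

lemma int_key (p : ℕ) [hp : Fact p.Prime] (k l : ℕ) (hl : l ≤ k) :
    ∃ c : ℤ[X], ((1 : ℤ[X]) - X ^ p ^ l) ^ ((p - 1) * p ^ (k - l)) -
      ∑ i ∈ Finset.range p, (X : ℤ[X]) ^ (i * p ^ k) = (p : ℤ[X]) * c := by
  have hdvd : (C (p : ℤ)) ∣ ((1 : ℤ[X]) - X ^ p ^ l) ^ ((p - 1) * p ^ (k - l)) -
      ∑ i ∈ Finset.range p, (X : ℤ[X]) ^ (i * p ^ k) := by
    rw [Polynomial.C_dvd_iff_dvd_coeff]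
    intro i
    rw [← ZMod.intCast_zmod_eq_zero_iff_dvd]
    have hmap : Polynomial.map (Int.castRingHom (ZMod p))
        (((1 : ℤ[X]) - X ^ p ^ l) ^ ((p - 1) * p ^ (k - l)) -
          ∑ i ∈ Finset.range p, (X : ℤ[X]) ^ (i * p ^ k)) = 0 := by
      simp only [Polynomial.map_sub, Polynomial.map_pow, Polynomial.map_one,
        Polynomial.map_X, Polynomial.map_sum]
      rw [charp_key p k l hl]
      ring
    have := Polynomial.ext_iff.mp hmap i
    rw [Polynomial.coeff_map, Polynomial.coeff_zero, eq_intCast] at this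
    exact this
  obtain ⟨c, hc⟩ := hdvd
  exact ⟨c, by rw [hc]; simp⟩


/-- from the proof of Lemma 4.1: with `Φ(X) = ∑_{i<p} X^(i p^k)`, for every
`0 ≤ l ≤ k` and every `n ≥ 1`, in `ℤ_(p)[X]/(Φ, (1 − X)^n)` the image of `p` lies in the
principal ideal generated by the image of `1 − X^(p^l)`. -/
theorem stmt4 (p : ℕ) [hp : Fact p.Prime] (k : ℕ) (l : ℕ) (hl : l ≤ k) (n : ℕ) (hn : 1 ≤ n) :
    Ideal.Quotient.mk
        (Ideal.span
          {(∑ i ∈ Finset.range p, (X : (IntLocAtPrime p)[X]) ^ (i * p ^ k)), (1 - X) ^ n})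
      (p : (IntLocAtPrime p)[X]) ∈
    Ideal.span
      {Ideal.Quotient.mk
        (Ideal.span
          {(∑ i ∈ Finset.range p, (X : (IntLocAtPrime p)[X]) ^ (i * p ^ k)), (1 - X) ^ n})
        (1 - X ^ p ^ l)} := by
  
  set R := IntLocAtPrime p with hRdef
  set Φ : R[X] := ∑ i ∈ Finset.range p, (X : R[X]) ^ (i * p ^ k) with hΦdef
  set I : Ideal R[X] := Ideal.span {Φ, (1 - X) ^ n} with hIdef
  set π : R[X] →+* R[X] ⧸ I := Ideal.Quotient.mk I with hπdef
  set N := (p - 1) * p ^ (k - l) with hNdef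
  have hN1 : N ≠ 0 :=
    Nat.mul_ne_zero (Nat.sub_ne_zero_of_lt hp.out.one_lt) (pow_ne_zero _ hp.out.ne_zero)
  obtain ⟨c0, hc0⟩ := int_key p k l hl
  set c : R[X] := c0.map (algebraMap ℤ R) with hcdef
  have hc : ((1 : R[X]) - X ^ p ^ l) ^ N = Φ + (p : R[X]) * c := by
    have := congrArg (Polynomial.map (algebraMap ℤ R)) hc0
    simp only [Polynomial.map_sub, Polynomial.map_pow, Polynomial.map_one, Polynomial.map_X,
      Polynomial.map_sum, Polynomial.map_mul, Polynomial.map_natCast] at this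
    rw [← hcdef] at this
    rw [← hΦdef] at this
    linear_combination this
  -- p ≠ 0 in R
  have hinj : Function.Injective (algebraMap ℤ R) :=
    IsLocalization.injective (M := (Ideal.span {(p : ℤ)}).primeCompl) R
      (Ideal.primeCompl_le_nonZeroDivisors _)
  have hp0 : (p : R) ≠ 0 := by
    intro h
    have : algebraMap ℤ R (p : ℤ) = algebraMap ℤ R 0 := by
      rw [map_natCast, map_zero]; exact h
    exact hp.out.ne_zero (by exact_mod_cast hinj this)
  -- eval at 1 : c.eval 1 = -1
  have heval : Polynomial.eval 1 c = -1 := by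
    have := congrArg (Polynomial.eval 1) hc
    simp only [Polynomial.eval_pow, Polynomial.eval_sub, Polynomial.eval_one, Polynomial.eval_X,
      one_pow, sub_self, zero_pow hN1, Polynomial.eval_add, Polynomial.eval_mul,
      Polynomial.eval_natCast, hΦdef, Polynomial.eval_finset_sum] at this
    rw [Finset.sum_const, Finset.card_range, nsmul_eq_mul, mul_one] at this
    have hfac : (p : R) * (1 + Polynomial.eval 1 c) = 0 := by linear_combination -this
    rcases mul_eq_zero.mp hfac with h | h
    · exact absurd h hp0
    · linear_combination h
  -- c = -1 + (X - 1) * h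
  obtain ⟨h, hh⟩ := Polynomial.X_sub_C_dvd_sub_C_eval (a := (1 : R)) (p := c)
  rw [heval] at hh
  have hΦ0 : π Φ = 0 := Ideal.Quotient.eq_zero_iff_mem.mpr (Ideal.subset_span (by simp))
  have hnil : IsNilpotent (π (1 - X)) :=
    ⟨n, by
      rw [← map_pow]
      exact Ideal.Quotient.eq_zero_iff_mem.mpr (Ideal.subset_span (by simp))⟩
  have hunit : IsUnit (π c) := by
    have hcπ : π c = -(1 + π (1 - X) * π h) := by
      have : c = -1 - (1 - X) * h := by
        have : c - Polynomial.C (-1) = (X - Polynomial.C 1) * h := hh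
        rw [map_neg, map_one] at this
        linear_combination this
      rw [this]
      push_cast [map_sub, map_neg, map_one, map_mul]
      ring
    have hn2 : IsNilpotent (π (1 - X) * π h) :=
      (Commute.all (π (1 - X)) (π h)).isNilpotent_mul_right hnil
    have hu1 : IsUnit (1 + π (1 - X) * π h) := hn2.isUnit_one_add
    obtain ⟨v, hv⟩ := hu1.exists_right_inv
    refine ⟨⟨π c, -v, ?_, ?_⟩, rfl⟩ <;>
    rw [hcπ] <;>
    linear_combination hv
  have key : π ((1 : R[X]) - X ^ p ^ l) ^ N = π (p : R[X]) * π c := by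
    rw [← map_pow, hc, map_add, map_mul, hΦ0, zero_add]
  refine (Ideal.mem_span_singleton (α := R[X] ⧸ I)).mpr ?_
  refine dvd_trans (dvd_pow_self (π ((1 : R[X]) - X ^ p ^ l)) hN1) ?_
  refine ⟨((hunit.unit⁻¹ : Units _) : R[X] ⧸ I), ?_⟩
  have hcu : π c * ((hunit.unit⁻¹ : Units _) : R[X] ⧸ I) = 1 := hunit.mul_val_inv
  linear_combination (-(((hunit.unit⁻¹ : Units _) : R[X] ⧸ I))) * key - π (p : R[X]) * hcu
end

section
/- Let p be a prime and k ≥ 0 an integer, and write Φ(X) = ∑_{i=0}^{p−1} X^{i·p^k} ∈ ℤ[X]. Then for every integer l with 0 ≤ l ≤ k and every integer n ≥ 1, in the quotient ring ℤ_(p)[X]/(Φ(X), (1 − X)^n) the image of (1 − X)^{p^l} lies in the principal ideal generated by the image of 1 − X^{p^l}. -/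
open Polynomial Finset

/-- from the proof of Lemma 4.1: with `Φ(X) = ∑_{i<p} X^(i p^k)`, for every
`0 ≤ l ≤ k` and every `n ≥ 1`, in `ℤ_(p)[X]/(Φ, (1 − X)^n)` the image of `(1 − X)^(p^l)` lies in
the principal ideal generated by the image of `1 − X^(p^l)`. -/
theorem stmt5 (p : ℕ) [hp : Fact p.Prime] (k : ℕ) (l : ℕ) (hl : l ≤ k) (n : ℕ) (hn : 1 ≤ n) :
    Ideal.Quotient.mk
        (Ideal.span
          {(∑ i ∈ Finset.range p, (X : (IntLocAtPrime p)[X]) ^ (i * p ^ k)), (1 - X) ^ n})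
      ((1 - X) ^ p ^ l) ∈
    Ideal.span
      {Ideal.Quotient.mk
        (Ideal.span
          {(∑ i ∈ Finset.range p, (X : (IntLocAtPrime p)[X]) ^ (i * p ^ k)), (1 - X) ^ n})
        (1 - X ^ p ^ l)} := by

  set R := IntLocAtPrime p
  set Φ : R[X] := ∑ i ∈ Finset.range p, (X : R[X]) ^ (i * p ^ k) with hΦdef
  set I : Ideal R[X] := Ideal.span {Φ, (1 - X) ^ n} with hIdef
  set mk := Ideal.Quotient.mk I with hmkdef
  -- Step 1: divisibility in ℤ[X] : C p ∣ (1-X)^(p^l) - (1 - X^(p^l))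
  have hdvdZ : (C (p : ℤ)) ∣ ((1 - X) ^ p ^ l - (1 - X ^ p ^ l) : ℤ[X]) := by
    rw [Polynomial.C_dvd_iff_dvd_coeff]
    intro i
    have h0 : (((1 - X) ^ p ^ l - (1 - X ^ p ^ l) : ℤ[X]).map
        (Int.castRingHom (ZMod p))) = 0 := by
      simp only [Polynomial.map_sub, Polynomial.map_pow, Polynomial.map_one, Polynomial.map_X]
      rw [sub_pow_char_pow]
      ring
    have h1 := congrArg (fun q => Polynomial.coeff q i) h0
    simp only [Polynomial.coeff_map, Polynomial.coeff_zero] at h1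
    exact (ZMod.intCast_zmod_eq_zero_iff_dvd _ p).mp h1
  -- transfer to R[X]
  have hdvdR : (C (p : R)) ∣ ((1 - X) ^ p ^ l - (1 - X ^ p ^ l) : R[X]) := by
    obtain ⟨h, hh⟩ := hdvdZ
    refine ⟨h.map (Int.castRingHom R), ?_⟩
    have h2 := congrArg (Polynomial.map (Int.castRingHom R)) hh
    simp only [Polynomial.map_sub, Polynomial.map_pow, Polynomial.map_one, Polynomial.map_X,
      Polynomial.map_mul, Polynomial.map_C] at h2
    simpa using h2
  -- Step 2: (X^(p^l) - 1) ∣ (Φ - C p)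
  have hdvd2 : ((X : R[X]) ^ p ^ l - 1) ∣ (Φ - C (p : R)) := by
    have hsum : Φ - C (p : R) =
        ∑ i ∈ Finset.range p, (((X : R[X]) ^ p ^ k) ^ i - 1) := by
      rw [Finset.sum_sub_distrib]
      congr 1
      · rw [hΦdef]
        refine Finset.sum_congr rfl fun i _ => ?_
        rw [← pow_mul, mul_comm]
      · simp [Polynomial.C_eq_natCast]
    rw [hsum]
    refine Finset.dvd_sum fun i _ => ?_
    have hkl : ((X : R[X]) ^ p ^ l - 1) ∣ ((X : R[X]) ^ p ^ k - 1) := by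
      have hx : (X : R[X]) ^ p ^ k = ((X : R[X]) ^ p ^ l) ^ p ^ (k - l) := by
        rw [← pow_mul, ← pow_add, Nat.add_sub_cancel' hl]
      rw [hx]
      simpa using sub_dvd_pow_sub_pow ((X : R[X]) ^ p ^ l) 1 (p ^ (k - l))
    exact hkl.trans (by simpa using sub_dvd_pow_sub_pow ((X : R[X]) ^ p ^ k) 1 i)
  -- Step 3: mk (C p) ∈ span {mk (1 - X^(p^l))}
  have hΦmem : mk Φ = 0 := by
    rw [Ideal.Quotient.eq_zero_iff_mem]
    exact Ideal.subset_span (Set.mem_insert _ _)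
  have hpmem : mk (C (p : R)) ∈ Ideal.span {mk ((1 : R[X]) - X ^ p ^ l)} := by
    obtain ⟨t, ht⟩ := hdvd2
    have hC : (C (p : R) : R[X]) = Φ + (1 - X ^ p ^ l) * t := by
      linear_combination -ht
    rw [Ideal.mem_span_singleton']
    refine ⟨mk t, ?_⟩
    rw [hC]
    simp only [map_add, map_mul, hΦmem, zero_add]
    ring
  -- Final step
  obtain ⟨h, hh⟩ := hdvdR
  have hfin : ((1 - X) ^ p ^ l : R[X]) = (1 - X ^ p ^ l) + C (p : R) * h := by
    linear_combination hh
  rw [hfin, map_add, map_mul]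
  exact Ideal.add_mem _ (Ideal.subset_span rfl) (by letI : CommRing (R[X] ⧸ I) := Ideal.Quotient.commRing I; exact Ideal.mul_mem_right _ _ hpmem)
end

section
/- Let p be a prime and k ≥ 0 an integer, and write Φ(X) = ∑_{i=0}^{p−1} X^{i·p^k} ∈ ℤ[X]. Let e_0, …, e_k and j be nonnegative integers and let n ≥ 1. Then in the quotient ring ℤ_(p)[X]/(Φ(X), (1 − X)^n), the image of the polynomial (∏_{l=0}^k (1 − X^{p^l})^{e_l})·(1 − X)^j lies in the principal ideal generated by the image of (1 − X)^{j + ∑_{l=0}^k e_l·p^l}. -/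
open Polynomial Finset

lemma frob_int (p : ℕ) (hp : p.Prime) (m : ℕ) :
    ∃ h : ℤ[X], (1 - X) ^ p ^ m = 1 - X ^ p ^ m + (p : ℤ[X]) * ((X - 1) * h) := by
  haveI : Fact p.Prime := ⟨hp⟩
  set D : ℤ[X] := (1 - X) ^ p ^ m - (1 - X ^ p ^ m) with hD
  have hmap : D.map (Int.castRingHom (ZMod p)) = 0 := by
    simp only [hD, Polynomial.map_sub, Polynomial.map_pow, Polynomial.map_one, Polynomial.map_X]
    rw [sub_pow_char_pow]
    ring
  have hdvd : C (p : ℤ) ∣ D := by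
    rw [C_dvd_iff_dvd_coeff]
    intro i
    have := congrArg (fun q => Polynomial.coeff q i) hmap
    simp only [Polynomial.coeff_map, Polynomial.coeff_zero] at this
    exact_mod_cast (ZMod.intCast_zmod_eq_zero_iff_dvd _ p).mp this
  obtain ⟨g, hg⟩ := hdvd
  have hpm : p ^ m ≠ 0 := pow_ne_zero m hp.ne_zero
  have heval : g.eval 1 = 0 := by
    have h1 : D.eval 1 = 0 := by simp [hD, hpm, hp.ne_zero]
    rw [hg] at h1
    simp at h1
    exact h1.resolve_left (by exact_mod_cast hp.ne_zero)
  have hroot : (X - 1 : ℤ[X]) ∣ g := by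
    have := (dvd_iff_isRoot (p := g) (a := (1:ℤ))).mpr heval
    simpa using this
  obtain ⟨h, hh⟩ := hroot
  refine ⟨h, ?_⟩
  have : C (p:ℤ) = ((p:ℕ) : ℤ[X]) := by simp
  rw [← hh, ← this, ← hg, hD]; ring

lemma frob_ring {R : Type*} [CommRing R] (p : ℕ) (hp : p.Prime) (m : ℕ) :
    ∃ h : R[X], (1 - X) ^ p ^ m = 1 - X ^ p ^ m + (p : R[X]) * ((X - 1) * h) := by
  obtain ⟨h, hh⟩ := frob_int p hp m
  refine ⟨h.map (Int.castRingHom R), ?_⟩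
  have := congrArg (Polynomial.map (Int.castRingHom R)) hh
  simpa [Polynomial.map_mul, Polynomial.map_add, Polynomial.map_sub, Polynomial.map_pow,
    Polynomial.map_one, Polynomial.map_X, Polynomial.map_natCast] using this

theorem stmt7_general (p : ℕ) [hp : Fact p.Prime] (k : ℕ) (e : ℕ → ℕ) (j n : ℕ) (hn : 1 ≤ n)
    (R : Type) [CommRing R] :
    Ideal.Quotient.mk
        (Ideal.span
          {(∑ i ∈ Finset.range p, (X : R[X]) ^ (i * p ^ k)), (1 - X) ^ n})
      ((∏ l ∈ Finset.range (k + 1), (1 - X ^ p ^ l) ^ e l) * (1 - X) ^ j) ∈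
    Ideal.span
      {Ideal.Quotient.mk
        (Ideal.span
          {(∑ i ∈ Finset.range p, (X : R[X]) ^ (i * p ^ k)), (1 - X) ^ n})
        ((1 - X) ^ (j + ∑ l ∈ Finset.range (k + 1), e l * p ^ l))} := by
  set Φ : R[X] := ∑ i ∈ Finset.range p, (X : R[X]) ^ (i * p ^ k) with hΦdef
  set I : Ideal R[X] := Ideal.span {Φ, (1 - X) ^ n} with hIdef
  set f := Ideal.Quotient.mk I with hfdef
  rw [Ideal.mem_span_singleton]
  set x : R[X] ⧸ I := f X with hxdef
  set π : R[X] ⧸ I := 1 - x with hπdef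
  -- basic facts
  have hπn : π ^ n = 0 := by
    have : π ^ n = f ((1 - X) ^ n) := by
      rw [map_pow, map_sub, map_one, hπdef, hxdef]
    rw [this, Ideal.Quotient.eq_zero_iff_mem]
    exact Ideal.subset_span (by simp)
  have hΦ0 : f Φ = 0 := by
    rw [Ideal.Quotient.eq_zero_iff_mem]
    exact Ideal.subset_span (by simp)
  -- p = z * (f c) in the quotient, z = 1 - x^(p^k)
  have hdvdΦ : (X ^ p ^ k - 1 : R[X]) ∣ Φ - (p : R[X]) := by
    have h1 : Φ - (p : R[X]) = ∑ i ∈ Finset.range p, ((X ^ p ^ k) ^ i - 1 ^ i) := by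
      rw [hΦdef, Finset.sum_sub_distrib]
      simp [← pow_mul, mul_comm]
    rw [h1]
    exact Finset.dvd_sum fun i _ => sub_dvd_pow_sub_pow _ _ i
  obtain ⟨c, hc⟩ := hdvdΦ
  set z : R[X] ⧸ I := 1 - x ^ p ^ k with hzdef
  have hpz : (p : R[X] ⧸ I) = z * f c := by
    have h3 := congrArg f hc
    rw [map_sub, map_natCast, map_mul, map_sub, map_pow, map_one, hΦ0, ← hxdef] at h3
    rw [hzdef]
    linear_combination -h3
  -- z = π^(p^k) * unit⁻¹
  obtain ⟨h, hh⟩ := frob_ring (R := R) p hp.out k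
  have hfh : (1 - x) ^ p ^ k = 1 - x ^ p ^ k + (p : R[X] ⧸ I) * ((x - 1) * f h) := by
    have h4 := congrArg f hh
    rw [map_pow, map_sub, map_add, map_mul, map_mul, map_sub, map_sub, map_pow, map_one,
      map_natCast, ← hxdef] at h4
    exact h4
  have hkey : π ^ p ^ k = z * (1 + f c * ((x - 1) * f h)) := by
    rw [hπdef, hzdef, hfh, hpz]
    ring
  have hwnil : IsNilpotent (f c * ((x - 1) * f h)) := by
    refine ⟨n, ?_⟩
    have h5 : f c * ((x - 1) * f h) = π * (-(f c * f h)) := by rw [hπdef]; ring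
    rw [h5, mul_pow, hπn, zero_mul]
  obtain ⟨u, hu'⟩ := hwnil.isUnit_one_add
  have hzdvd : π ^ p ^ k ∣ z := by
    refine ⟨(↑u⁻¹ : (R[X] ⧸ I)ˣ), ?_⟩
    rw [hkey, ← hu', mul_assoc, Units.mul_inv, mul_one]
  have hpdvd : π ^ p ^ k ∣ (p : R[X] ⧸ I) := hpz ▸ hzdvd.mul_right _
  -- main divisibility for each l ≤ k
  have key : ∀ l ≤ k, π ^ p ^ l ∣ 1 - x ^ p ^ l := by
    intro l hl
    obtain ⟨hl', hhl⟩ := frob_ring (R := R) p hp.out l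
    have h6 : (1 - x) ^ p ^ l = 1 - x ^ p ^ l + (p : R[X] ⧸ I) * ((x - 1) * f hl') := by
      have h4 := congrArg f hhl
      rw [map_pow, map_sub, map_add, map_mul, map_mul, map_sub, map_sub, map_pow, map_one,
        map_natCast, ← hxdef] at h4
      exact h4
    have h7 : 1 - x ^ p ^ l = π ^ p ^ l - (p : R[X] ⧸ I) * ((x - 1) * f hl') := by
      rw [hπdef, h6]; ring
    rw [h7]
    refine dvd_sub dvd_rfl (Dvd.dvd.mul_right ?_ _)
    exact dvd_trans (pow_dvd_pow π (Nat.pow_le_pow_right hp.out.pos hl)) hpdvd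
  -- conclude
  have hgoal1 : f ((1 - X) ^ (j + ∑ l ∈ Finset.range (k + 1), e l * p ^ l))
      = π ^ j * π ^ (∑ l ∈ Finset.range (k + 1), e l * p ^ l) := by
    rw [map_pow, map_sub, map_one, ← hxdef, ← hπdef, pow_add, mul_comm]
  have hgoal2 : f ((∏ l ∈ Finset.range (k + 1), (1 - X ^ p ^ l) ^ e l) * (1 - X) ^ j)
      = (∏ l ∈ Finset.range (k + 1), (1 - x ^ p ^ l) ^ e l) * π ^ j := by
    simp only [map_mul, map_prod, map_pow, map_sub, map_one, ← hxdef, ← hπdef]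
  rw [hgoal1, hgoal2, mul_comm (∏ l ∈ Finset.range (k + 1), (1 - x ^ p ^ l) ^ e l) (π ^ j)]
  refine mul_dvd_mul dvd_rfl ?_
  calc π ^ ∑ l ∈ Finset.range (k + 1), e l * p ^ l
      = ∏ l ∈ Finset.range (k + 1), (π ^ p ^ l) ^ e l := by
        rw [← Finset.prod_pow_eq_pow_sum]
        exact Finset.prod_congr rfl fun l _ => by rw [← pow_mul, mul_comm]
    _ ∣ ∏ l ∈ Finset.range (k + 1), (1 - x ^ p ^ l) ^ e l :=
        Finset.prod_dvd_prod_of_dvd _ _ fun l hl =>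
          pow_dvd_pow_of_dvd (key l (Nat.lt_succ_iff.mp (Finset.mem_range.mp hl))) _

/-- membership claim of Remark 4.2: with `Φ(X) = ∑_{i<p} X^(i p^k)`, for
nonnegative integers `e 0, …, e k`, `j` and `n ≥ 1`, in `ℤ_(p)[X]/(Φ, (1 − X)^n)` the image of
`(∏_{l≤k} (1 − X^(p^l))^(e l)) (1 − X)^j` lies in the principal ideal generated by the image of
`(1 − X)^(j + ∑_{l≤k} e l · p^l)`. -/
theorem stmt7 (p : ℕ) [hp : Fact p.Prime] (k : ℕ) (e : ℕ → ℕ) (j n : ℕ) (hn : 1 ≤ n) :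
    Ideal.Quotient.mk
        (Ideal.span
          {(∑ i ∈ Finset.range p, (X : (IntLocAtPrime p)[X]) ^ (i * p ^ k)), (1 - X) ^ n})
      ((∏ l ∈ Finset.range (k + 1), (1 - X ^ p ^ l) ^ e l) * (1 - X) ^ j) ∈
    Ideal.span
      {Ideal.Quotient.mk
        (Ideal.span
          {(∑ i ∈ Finset.range p, (X : (IntLocAtPrime p)[X]) ^ (i * p ^ k)), (1 - X) ^ n})
        ((1 - X) ^ (j + ∑ l ∈ Finset.range (k + 1), e l * p ^ l))} := by
  exact stmt7_general p k e j n hn (IntLocAtPrime p)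
end

section
/- Let p be a prime and k ≥ 0 an integer. Let t_1, …, t_m be positive integers whose p-adic valuations satisfy ν_p(t_i) ≤ k for every i, with ν_p(t_i) = k for at least one i. Set m_l = #{i : ν_p(t_i) = l} for 0 ≤ l ≤ k and δ = ∑_{l=0}^k p^l·m_l − (p^k − 1). Then for all integers j ≥ 0 and n with 1 ≤ n ≤ j + δ, the image of the polynomial (∏_{i=1}^m (1 − X^{t_i}))·(1 − X)^j in the quotient ring ℤ_(p)[X]/(1 − X^{p^{k+1}}, (1 − X)^n) is zero. -/
open Polynomial Finset

private lemma one_sub_pow_dvd_aux {R : Type*} [CommRing R] (x : R) {a b : ℕ} (h : a ∣ b) :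
    (1 - x ^ a) ∣ (1 - x ^ b) := by
  obtain ⟨c, rfl⟩ := h
  have := sub_dvd_pow_sub_pow (1:R) (x ^ a) c
  simpa [pow_mul] using this

private lemma bin1 {R : Type*} [CommRing R] {p : ℕ} (hp : p.Prime) (v : ℕ) (y : R) :
    ∃ q : R, 1 - (1 - y) ^ p ^ v = (p : R) * y * q + (-1) ^ (p ^ v + 1) * y ^ p ^ v := by
  obtain ⟨w, hw⟩ : ∃ w, p ^ v = w + 1 :=
    ⟨p ^ v - 1, (Nat.succ_pred_eq_of_pos (pow_pos hp.pos v)).symm⟩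
  suffices h : ((p : R) * y) ∣ (1 - (1 - y) ^ p ^ v - (-1) ^ (p ^ v + 1) * y ^ p ^ v) by
    obtain ⟨q, hq⟩ := h
    exact ⟨q, by linear_combination hq⟩
  have hexp : (1 - y) ^ p ^ v
      = ∑ i ∈ range (p ^ v + 1), 1 ^ i * (-y) ^ (p ^ v - i) * ((p ^ v).choose i) := by
    rw [sub_eq_add_neg]; exact add_pow 1 (-y) (p ^ v)
  rw [hexp, sum_range_succ]
  rw [hw, sum_range_succ']
  have h1 : 1 - (∑ i ∈ range w, 1 ^ (i+1) * (-y) ^ (w + 1 - (i+1)) * ((w+1).choose (i+1))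
        + 1 ^ 0 * (-y) ^ (w + 1 - 0) * ((w+1).choose 0)
        + 1 ^ (w+1) * (-y) ^ (w + 1 - (w+1)) * ((w+1).choose (w+1)))
      - (-1) ^ ((w+1) + 1) * y ^ (w+1)
      = - ∑ i ∈ range w, 1 ^ (i+1) * (-y) ^ (w + 1 - (i+1)) * ((w+1).choose (i+1)) := by
    rw [Nat.choose_zero_right, Nat.choose_self]
    simp only [Nat.sub_self, Nat.sub_zero, pow_zero, Nat.cast_one]
    ring
  rw [h1]
  rw [dvd_neg]
  apply Finset.dvd_sum
  intro i hi
  have hiw : i < w := mem_range.mp hi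
  have hch : p ∣ (w+1).choose (i+1) := by
    rw [← hw]
    exact hp.dvd_choose_pow (Nat.succ_ne_zero i) (by omega)
  obtain ⟨d, hd⟩ := hch
  have he : w + 1 - (i+1) = (w - i - 1) + 1 := by omega
  refine ⟨1 ^ (i+1) * (-1) * (-y) ^ (w - i - 1) * (d : R), ?_⟩
  rw [he, hd, pow_succ]
  push_cast
  ring

private lemma bin2 {R : Type*} [CommRing R] {p : ℕ} (hp : p.Prime) (y : R) :
    ∃ s : R, 1 - (1 - y) ^ p = (p : R) * y + (p : R) * y ^ 2 * s + (-1) ^ (p + 1) * y ^ p := by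
  obtain ⟨w, hw⟩ : ∃ w, p = w + 2 := ⟨p - 2, by have := hp.two_le; omega⟩
  subst hw
  suffices h : (((w+2 : ℕ) : R) * y ^ 2) ∣
      (1 - (1 - y) ^ (w+2) - ((w+2 : ℕ) : R) * y - (-1) ^ ((w+2) + 1) * y ^ (w+2)) by
    obtain ⟨s, hs⟩ := h
    exact ⟨s, by linear_combination hs⟩
  have hexp : (1 - y) ^ (w+2)
      = ∑ i ∈ range ((w+2) + 1), 1 ^ i * (-y) ^ ((w+2) - i) * (((w+2)).choose i) := by
    rw [sub_eq_add_neg]; exact add_pow 1 (-y) (w+2)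
  rw [hexp, sum_range_succ, sum_range_succ', sum_range_succ]
  have hn1 : w + 2 - (w + 1) = 1 := by omega
  have hcw : (w+2).choose (w+1) = w + 2 := by
    have := Nat.choose_succ_self_right (w+1)
    simpa using this
  have h1 : 1 - ((∑ i ∈ range w, 1 ^ (i+1) * (-y) ^ (w + 2 - (i+1)) * ((w+2).choose (i+1))
        + 1 ^ (w+1) * (-y) ^ (w + 2 - (w+1)) * ((w+2).choose (w+1)))
        + 1 ^ 0 * (-y) ^ (w + 2 - 0) * ((w+2).choose 0)
        + 1 ^ (w+2) * (-y) ^ (w + 2 - (w+2)) * ((w+2).choose (w+2)))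
      - ((w+2 : ℕ) : R) * y - (-1) ^ ((w+2) + 1) * y ^ (w+2)
      = - ∑ i ∈ range w, 1 ^ (i+1) * (-y) ^ (w + 2 - (i+1)) * ((w+2).choose (i+1)) := by
    rw [Nat.choose_zero_right, Nat.choose_self, hn1, hcw]
    simp only [Nat.sub_self, Nat.sub_zero, pow_zero, Nat.cast_one]
    push_cast
    ring
  rw [h1, dvd_neg]
  apply Finset.dvd_sum
  intro i hi
  have hiw : i < w := mem_range.mp hi
  have hch : (w+2) ∣ (w+2).choose (i+1) := by
    exact hp.dvd_choose_self (Nat.succ_ne_zero i) (by omega)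
  obtain ⟨d, hd⟩ := hch
  have he : w + 2 - (i+1) = (w - i - 1) + 2 := by omega
  refine ⟨1 ^ (i+1) * (-y) ^ (w - i - 1) * (d : R), ?_⟩
  rw [he, hd, pow_add]
  push_cast
  ring

private lemma key {R : Type*} [CommRing R] [IsDomain R] {p : ℕ} (hp : p.Prime)
    (k v a : ℕ) (hv : v ≤ k) :
    (1 - (X : R[X]) ^ p ^ v) * (1 - X) ^ a ∈
      Ideal.span {∑ r ∈ range p, ((X : R[X]) ^ p ^ k) ^ r, (1 - X) ^ (a + p ^ v)} := by
  obtain ⟨e2, he2⟩ : ∃ e, p - 1 = e + 1 := ⟨p - 2, by have := hp.two_le; omega⟩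
  set N : R[X] := ∑ r ∈ range p, ((X : R[X]) ^ p ^ k) ^ r with hNdef
  set Y : R[X] := 1 - X with hYdef
  set F : R[X] := 1 - X ^ p ^ v with hFdef
  set W : R[X] := 1 - X ^ p ^ k with hWdef
  -- polynomial-level identities
  obtain ⟨q, hq⟩ : ∃ q : R[X], F = (p : R[X]) * Y * q + (-1) ^ (p ^ v + 1) * Y ^ p ^ v := by
    obtain ⟨q, hq⟩ := bin1 (R := R[X]) hp v Y
    refine ⟨q, ?_⟩
    rw [hFdef, ← hq, hYdef]
    ring_nf
  obtain ⟨M, hM⟩ : ∃ M, W = F * M := one_sub_pow_dvd_aux (X : R[X]) (pow_dvd_pow p hv)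
  obtain ⟨g, hg⟩ : ∃ g, W = Y * g := by
    have h := one_sub_pow_dvd_aux (X : R[X]) (one_dvd (p ^ k))
    rw [pow_one] at h
    exact h
  have hW0 : W ≠ 0 := by
    have h1 : (X : R[X]) ^ p ^ k - C 1 ≠ 0 :=
      X_pow_sub_C_ne_zero (pow_pos hp.pos k) 1
    rw [hWdef]
    intro h; apply h1
    rw [C_1]
    linear_combination -h
  have hWN : W * N = 1 - (X ^ p ^ k) ^ p := by
    have := mul_geom_sum ((X : R[X]) ^ p ^ k) p
    rw [hNdef, hWdef]
    linear_combination -this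
  obtain ⟨s, hs⟩ := bin2 (R := R[X]) hp W
  have hNid : N = (p : R[X]) + (p : R[X]) * W * s + (-1) ^ (p + 1) * W ^ (e2 + 1) := by
    apply mul_left_cancel₀ hW0
    have h1W : (1 : R[X]) - W = X ^ p ^ k := by rw [hWdef]; ring
    have hWp : W ^ p = W ^ (e2 + 1) * W := by
      rw [← pow_succ]; congr 1; omega
    rw [hWN, ← h1W]
    linear_combination hs + ((-1 : R[X]) ^ (p + 1)) * hWp
  -- pass to the quotient
  set I := Ideal.span {N, Y ^ (a + p ^ v)} with hIdef
  rw [← Ideal.Quotient.eq_zero_iff_mem]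
  set φ := Ideal.Quotient.mk I with hφ
  have hN0 : φ N = 0 := Ideal.Quotient.eq_zero_iff_mem.mpr
    (Ideal.subset_span (by simp))
  have hY0 : (φ Y) ^ (a + p ^ v) = 0 := by
    rw [← map_pow]
    exact Ideal.Quotient.eq_zero_iff_mem.mpr (Ideal.subset_span (by simp))
  -- B-level identities
  have h1 : φ F = φ (p : R[X]) * φ Y * φ q + (-1) ^ (p ^ v + 1) * (φ Y) ^ p ^ v := by
    have := congrArg φ hq
    simpa only [map_add, map_mul, map_pow, map_neg, map_one] using this
  have h3 : 0 = φ (p : R[X]) + φ (p : R[X]) * φ W * φ s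
      + (-1) ^ (p + 1) * (φ W) ^ (e2 + 1) := by
    have := congrArg φ hNid
    rw [hN0] at this
    simpa only [map_add, map_mul, map_pow, map_neg, map_one] using this
  have h4 : φ W = φ F * φ M := by rw [hM, map_mul]
  have h5 : φ W = φ Y * φ g := by rw [hg, map_mul]
  set z := φ F * (φ Y) ^ a with hz
  set c := -(φ g * φ s) + (-1) ^ p * (φ W) ^ e2 * φ M * φ q with hc
  have step1 : z = φ (p : R[X]) * φ q * (φ Y) ^ (a + 1) := by
    rw [hz]
    linear_combination ((φ Y) ^ a) * h1 + ((-1 : R[X] ⧸ I) ^ (p ^ v + 1)) * hY0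
  have step3 : z = -(φ W * φ s * z) + (-1) ^ p * (φ W) ^ (e2 + 1) * φ q * (φ Y) ^ (a + 1) := by
    linear_combination (1 + φ W * φ s) * step1 + (-(φ q * (φ Y) ^ (a + 1))) * h3
  have step4 : z = (φ Y * c) * z := by
    rw [hc, hz]
    linear_combination step3 + (-(φ s * z)) * h5
      + ((-1 : R[X] ⧸ I) ^ p * (φ W) ^ e2 * φ q * (φ Y) ^ (a + 1)) * h4
  have hpowz : ∀ r : ℕ, z = (φ Y * c) ^ r * z := by
    intro r
    induction r with
    | zero => simp
    | succ r ih =>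
      calc z = (φ Y * c) ^ r * z := ih
        _ = (φ Y * c) ^ r * ((φ Y * c) * z) := by rw [← step4]
        _ = (φ Y * c) ^ (r + 1) * z := by ring
  have hnil : (φ Y * c) ^ (a + p ^ v) = 0 := by
    rw [mul_pow, hY0, zero_mul]
  have hz0 : z = 0 := by rw [hpowz (a + p ^ v), hnil, zero_mul]
  calc φ (F * Y ^ a) = z := by rw [map_mul, map_pow]
    _ = 0 := hz0

private lemma peel {R : Type*} [CommRing R] [IsDomain R] {p : ℕ} (hp : p.Prime) (k : ℕ)
    {m : ℕ} (t : Fin m → ℕ) (T : Finset (Fin m))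
    (hT : ∀ i ∈ T, padicValNat p (t i) ≤ k) (c₀ : ℕ) :
    ∃ α β : R[X],
      (1 - X ^ p ^ k) * (∏ i ∈ T, (1 - X ^ t i)) * (1 - X) ^ c₀
        = α * (1 - X ^ p ^ (k + 1))
          + β * ((1 - X ^ p ^ k) * (1 - X) ^ (c₀ + ∑ i ∈ T, p ^ padicValNat p (t i))) := by
  classical
  have hG : (1 - (X : R[X]) ^ p ^ k) * ∑ r ∈ range p, ((X : R[X]) ^ p ^ k) ^ r
      = 1 - X ^ p ^ (k + 1) := by
    have h := mul_geom_sum ((X : R[X]) ^ p ^ k) p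
    have h2 : ((X : R[X]) ^ p ^ k) ^ p = X ^ p ^ (k + 1) := by
      rw [← pow_mul, ← pow_succ]
    linear_combination -h + h2
  induction T using Finset.induction_on with
  | empty =>
    refine ⟨0, 1, ?_⟩
    rw [prod_empty, sum_empty]
    ring
  | @insert i T hiT IH =>
    obtain ⟨α, β, hαβ⟩ := IH (fun i hi => hT i (mem_insert_of_mem hi))
    obtain ⟨S, hS⟩ : ∃ S, (1 : R[X]) - X ^ t i = (1 - X ^ p ^ padicValNat p (t i)) * S :=
      one_sub_pow_dvd_aux (X : R[X]) pow_padicValNat_dvd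
    obtain ⟨γ, η, hkey⟩ := Ideal.mem_span_pair.mp
      (key (R := R) hp k (padicValNat p (t i)) (c₀ + ∑ i ∈ T, p ^ padicValNat p (t i))
        (hT i (mem_insert_self i T)))
    refine ⟨(1 - X ^ t i) * α + β * S * γ, β * S * η, ?_⟩
    rw [prod_insert hiT, sum_insert hiT]
    linear_combination (1 - (X : R[X]) ^ t i) * hαβ
      + (β * (1 - X ^ p ^ k) * (1 - X) ^ (c₀ + ∑ i ∈ T, p ^ padicValNat p (t i))) * hS
      + (β * S * (1 - X ^ p ^ k)) * hkey.symm
      + (β * S * γ) * hG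

/-- optimality, Remark 4.2: with the notation of Lemma 4.1
(`m_l = #{i : ν_p(t i) = l}`, `δ = ∑_{l≤k} p^l m_l − (p^k − 1)`), for all `j ≥ 0` and
`1 ≤ n ≤ j + δ`, the image of `(∏ i (1 − X^(t i))) (1 − X)^j` in
`ℤ_(p)[X]/(1 − X^(p^(k+1)), (1 − X)^n)` is zero. -/
theorem stmt8 (p : ℕ) [hp : Fact p.Prime] (k m : ℕ) (t : Fin m → ℕ)
    (ht : ∀ i, 0 < t i)
    (hle : ∀ i, padicValNat p (t i) ≤ k)
    (hex : ∃ i, padicValNat p (t i) = k)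
    (j n : ℕ) (hn1 : 1 ≤ n)
    (hn : (n : ℤ) ≤ (j : ℤ) +
        ((∑ l ∈ Finset.range (k + 1), (p : ℤ) ^ l *
            ((Finset.univ.filter fun i => padicValNat p (t i) = l).card : ℤ)) -
          ((p : ℤ) ^ k - 1))) :
    Ideal.Quotient.mk
        (Ideal.span {1 - (X : (IntLocAtPrime p)[X]) ^ p ^ (k + 1), (1 - X) ^ n})
      ((∏ i, (1 - X ^ t i)) * (1 - X) ^ j) = 0 := by
  classical
  obtain ⟨i0, hi0⟩ := hex
  -- arithmetic: n ≤ j + 1 + SS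
  set SS : ℕ := ∑ i ∈ Finset.univ.erase i0, p ^ padicValNat p (t i) with hSS
  have hnn : n ≤ j + 1 + SS := by
    have hfib : ∑ l ∈ Finset.range (k + 1), (p : ℤ) ^ l *
          ((Finset.univ.filter fun i => padicValNat p (t i) = l).card : ℤ)
        = ∑ i : Fin m, (p : ℤ) ^ padicValNat p (t i) := by
      rw [← Finset.sum_fiberwise_of_maps_to
        (fun i _ => Finset.mem_range.mpr (lt_of_le_of_lt (hle i) (lt_add_one k)))
        (fun i => (p : ℤ) ^ padicValNat p (t i))]
      refine Finset.sum_congr rfl fun l _ => ?_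
      rw [Finset.sum_congr rfl (fun i hi => by rw [(Finset.mem_filter.mp hi).2]),
        Finset.sum_const, nsmul_eq_mul, mul_comm]
    have hsplit : ∑ i : Fin m, (p : ℤ) ^ padicValNat p (t i)
        = (p : ℤ) ^ k + (SS : ℤ) := by
      rw [← Finset.add_sum_erase Finset.univ _ (Finset.mem_univ i0), hi0, hSS]
      push_cast
      ring
    rw [hfib, hsplit] at hn
    have : (n : ℤ) ≤ (j : ℤ) + 1 + (SS : ℤ) := by linarith
    exact_mod_cast this
  -- factorizations
  obtain ⟨α, β, hαβ⟩ := peel (R := IntLocAtPrime p) hp.out k t (Finset.univ.erase i0)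
    (fun i _ => hle i) j
  obtain ⟨S₀, hS₀⟩ : ∃ S₀, (1 : (IntLocAtPrime p)[X]) - X ^ t i0
      = (1 - X ^ p ^ k) * S₀ := by
    refine one_sub_pow_dvd_aux (X : (IntLocAtPrime p)[X]) ?_
    rw [← hi0]; exact pow_padicValNat_dvd
  obtain ⟨g, hg⟩ : ∃ g, (1 : (IntLocAtPrime p)[X]) - X ^ p ^ k = (1 - X) * g := by
    have h := one_sub_pow_dvd_aux (X : (IntLocAtPrime p)[X]) (one_dvd (p ^ k))
    rwa [pow_one] at h
  have hprod : (∏ i, (1 - (X : (IntLocAtPrime p)[X]) ^ t i))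
      = (1 - X ^ t i0) * ∏ i ∈ Finset.univ.erase i0, (1 - X ^ t i) :=
    (Finset.mul_prod_erase Finset.univ _ (Finset.mem_univ i0)).symm
  have hYsplit : ((1 : (IntLocAtPrime p)[X]) - X) ^ (j + SS) * (1 - X)
      = (1 - X) ^ n * (1 - X) ^ (j + 1 + SS - n) := by
    rw [← pow_succ, ← pow_add]
    congr 1
    omega
  rw [Ideal.Quotient.eq_zero_iff_mem, Ideal.mem_span_pair]
  refine ⟨S₀ * α, S₀ * β * g * (1 - X) ^ (j + 1 + SS - n), ?_⟩
  linear_combination (-((1 - (X : (IntLocAtPrime p)[X])) ^ j)) * hprod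
    - ((∏ i ∈ Finset.univ.erase i0, (1 - (X : (IntLocAtPrime p)[X]) ^ t i)) * (1 - X) ^ j) * hS₀
    - S₀ * hαβ
    - (S₀ * β * (1 - (X : (IntLocAtPrime p)[X])) ^ (j + SS)) * hg
    - (S₀ * β * g) * hYsplit
end

section
/- Let p be a prime and k ≥ 1, r ≥ 1, s ≥ 1 integers, and write ζ_m = exp(2πi/p^m) for m ≥ 1. Suppose there exists a continuous map f : S(ℂ^r) → S(ℂ^s) between unit spheres such that f(ζ_{k+1}·v) = ζ_{k+1}^p·f(v) for all v ∈ S(ℂ^r), where λ·v denotes coordinatewise multiplication by the complex scalar λ. Then there exists a continuous map g : S(ℂ^{p·r}) → S(ℂ^{p·s}) such that g(ζ_{k+2}·w) = ζ_{k+2}^p·g(w) for all w ∈ S(ℂ^{p·r}). -/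
open Metric

/-- `ζ_m = exp(2πi/p^m)`, a primitive `p^m`-th root of unity. -/
noncomputable def zetaPow (p m : ℕ) : ℂ :=
  Complex.exp (2 * Real.pi * Complex.I / (p : ℂ) ^ m)

namespace S9

open Finset




lemma zeta_ne_zero (p m : ℕ) : zetaPow p m ≠ 0 := Complex.exp_ne_zero _

lemma abs_zeta (p m : ℕ) : ‖zetaPow p m‖ = 1 := by
  have h : (2 * Real.pi * Complex.I / (p:ℂ)^m) = ((2 * Real.pi / (p:ℝ)^m : ℝ) : ℂ) * Complex.I := by
    push_cast; ring
  rw [zetaPow, h, Complex.norm_exp_ofReal_mul_I]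

lemma norm_zeta (p m : ℕ) : ‖zetaPow p m‖ = 1 := abs_zeta p m

lemma zeta_pow_succ (p m : ℕ) (hp : 0 < p) : zetaPow p (m+1) ^ p = zetaPow p m := by
  rw [zetaPow, zetaPow, ← Complex.exp_nat_mul]
  congr 1
  have hpc : ((p:ℂ)) ≠ 0 := Nat.cast_ne_zero.mpr hp.ne'
  field_simp
  ring

lemma zeta_pow_ord (p m : ℕ) (hp : 0 < p) : zetaPow p m ^ (p ^ m) = 1 := by
  rw [zetaPow, ← Complex.exp_nat_mul]
  have hpc : ((p:ℂ))^m ≠ 0 := pow_ne_zero _ (Nat.cast_ne_zero.mpr hp.ne')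
  have : (p:ℂ)^m * (2 * Real.pi * Complex.I / (p:ℂ)^m) = 2 * Real.pi * Complex.I := by
    rw [mul_comm, div_mul_cancel₀ _ hpc]
  push_cast
  rw [this, Complex.exp_two_pi_mul_I]

lemma pow_congr_mod {x : ℂ} {d n m : ℕ} (h1 : x ^ d = 1) (h : n ≡ m [MOD d]) :
    x ^ n = x ^ m := by
  rcases le_total m n with hle | hle
  · obtain ⟨t, ht⟩ := (Nat.modEq_iff_dvd' hle).mp h.symm
    have : n = m + d * t := by omega
    rw [this, pow_add, pow_mul, h1, one_pow, mul_one]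
  · obtain ⟨t, ht⟩ := (Nat.modEq_iff_dvd' hle).mp h
    have : m = n + d * t := by omega
    rw [this, pow_add, pow_mul, h1, one_pow, mul_one]

lemma mu_primitive (p k : ℕ) (hp : 0 < p) :
    IsPrimitiveRoot (zetaPow p (k+2) ^ (p ^ (k+1))) p := by
  have : zetaPow p (k+2) ^ (p ^ (k+1)) = Complex.exp (2 * Real.pi * Complex.I / p) := by
    rw [zetaPow, ← Complex.exp_nat_mul]
    congr 1
    have hpc : ((p:ℂ)) ≠ 0 := Nat.cast_ne_zero.mpr hp.ne'
    have h2 : ((p:ℂ))^(k+2) = (p:ℂ)^(k+1) * p := by ring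
    push_cast
    rw [h2]
    field_simp
  rw [this]
  exact Complex.isPrimitiveRoot_exp p hp.ne'

lemma mu_sum {p : ℕ} (hp : 0 < p) {μ : ℂ} (hμ : IsPrimitiveRoot μ p) {c : ℤ}
    (hc : ¬ ((p:ℤ) ∣ c)) : ∑ t : Fin p, (μ ^ c) ^ (t : ℕ) = 0 := by
  have hx1 : μ ^ c ≠ 1 := fun h => hc (hμ.zpow_eq_one_iff_dvd c |>.mp h)
  have hxp : (μ ^ c) ^ p = 1 := by
    rw [← zpow_natCast (μ ^ c), ← zpow_mul, mul_comm, zpow_mul, zpow_natCast, hμ.pow_eq_one,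
      one_zpow]
  rw [Fin.sum_univ_eq_sum_range (fun t => (μ ^ c) ^ t), geom_sum_eq hx1, hxp, sub_self, zero_div]



variable {E F : Type*} [NormedAddCommGroup E] [NormedSpace ℂ E]
  [NormedAddCommGroup F] [NormedSpace ℂ F]

open scoped Classical in
noncomputable def coneMap (f : sphere (0 : E) 1 → sphere (0 : F) 1) : E → F :=
  fun v =>
    if h : v = 0 then 0
    else ‖v‖ • (f ⟨‖v‖⁻¹ • v, by
      simp [mem_sphere_zero_iff_norm, norm_smul,
        inv_mul_cancel₀ (norm_ne_zero_iff.mpr h)]⟩ : F)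

lemma coneMap_zero (f : sphere (0 : E) 1 → sphere (0 : F) 1) : coneMap f 0 = 0 := by
  simp [coneMap]

lemma norm_coneMap (f : sphere (0 : E) 1 → sphere (0 : F) 1) (v : E) :
    ‖coneMap f v‖ = ‖v‖ := by
  rcases eq_or_ne v 0 with rfl | h
  · simp [coneMap]
  · have hm := (f ⟨‖v‖⁻¹ • v, by
      simp [mem_sphere_zero_iff_norm, norm_smul, inv_mul_cancel₀ (norm_ne_zero_iff.mpr h)]⟩).2
    rw [mem_sphere_zero_iff_norm] at hm
    rw [coneMap, dif_neg h, norm_smul, hm]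
    simp

lemma coneMap_eq_zero_iff (f : sphere (0 : E) 1 → sphere (0 : F) 1) (v : E) :
    coneMap f v = 0 ↔ v = 0 := by
  rw [← norm_eq_zero (a := coneMap f v), norm_coneMap, norm_eq_zero]

lemma coneMap_continuous (f : sphere (0 : E) 1 → sphere (0 : F) 1) (hf : Continuous f) :
    Continuous (coneMap f) := by
  rw [continuous_iff_continuousAt]
  intro v₀
  rcases eq_or_ne v₀ 0 with rfl | h₀
  · -- continuity at 0
    have : ContinuousAt (coneMap f) 0 := by
      rw [ContinuousAt, coneMap_zero]
      apply squeeze_zero_norm (a := fun v => ‖v‖) (fun v => le_of_eq (norm_coneMap f v))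
      simpa using (continuous_norm (E := E)).tendsto 0
    exact this
  · have hopen : IsOpen {v : E | v ≠ 0} := isOpen_compl_singleton
    apply ContinuousOn.continuousAt _ (hopen.mem_nhds h₀)
    rw [continuousOn_iff_continuous_restrict]
    have hval : Continuous fun v : {v : E // v ∈ {v : E | v ≠ 0}} => (v : E) :=
      continuous_subtype_val
    have hnorm : Continuous fun v : {v : E // v ∈ {v : E | v ≠ 0}} => ‖(v : E)‖ := hval.norm
    have hunit : Continuous fun v : {v : E // v ∈ {v : E | v ≠ 0}} =>
        (⟨‖(v : E)‖⁻¹ • (v : E), by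
          simp [mem_sphere_zero_iff_norm, norm_smul,
            inv_mul_cancel₀ (norm_ne_zero_iff.mpr v.2)]⟩ : sphere (0 : E) 1) := by
      apply Continuous.subtype_mk
      exact ((hnorm.inv₀ (fun v => norm_ne_zero_iff.mpr v.2)).smul hval)
    have : Continuous fun v : {v : E // v ∈ {v : E | v ≠ 0}} =>
        ‖(v : E)‖ • ((f (⟨‖(v : E)‖⁻¹ • (v : E), by
          simp [mem_sphere_zero_iff_norm, norm_smul,
            inv_mul_cancel₀ (norm_ne_zero_iff.mpr v.2)]⟩ : sphere (0 : E) 1)) : F) :=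
      hnorm.smul ((continuous_subtype_val.comp hf).comp hunit)
    convert this using 1
    funext v
    simp only [Set.restrict_apply, coneMap, dif_neg v.2]

lemma coneMap_equivariant {p : ℕ} (ζ1 : ℂ) (hζ : ‖ζ1‖ = 1)
    (f : sphere (0 : E) 1 → sphere (0 : F) 1)
    (hfe : ∀ v w : sphere (0 : E) 1, (w : E) = ζ1 • (v : E) →
      (f w : F) = ζ1 ^ p • (f v : F)) (v : E) :
    coneMap f (ζ1 • v) = ζ1 ^ p • coneMap f v := by
  have hζ0 : ζ1 ≠ 0 := by
    intro h; rw [h] at hζ; simp at hζ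
  rcases eq_or_ne v 0 with rfl | h
  · simp [coneMap_zero]
  · have hsv : ζ1 • v ≠ 0 := smul_ne_zero hζ0 h
    have hnv : ‖ζ1 • v‖ = ‖v‖ := by rw [norm_smul, hζ, one_mul]
    have hmem : ‖v‖⁻¹ • v ∈ sphere (0 : E) 1 := by
      simp [mem_sphere_zero_iff_norm, norm_smul, inv_mul_cancel₀ (norm_ne_zero_iff.mpr h)]
    have hmem' : ‖ζ1 • v‖⁻¹ • (ζ1 • v) ∈ sphere (0 : E) 1 := by
      simp [mem_sphere_zero_iff_norm, norm_smul, hζ,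
        inv_mul_cancel₀ (norm_ne_zero_iff.mpr h)]
    have key : (f ⟨‖ζ1 • v‖⁻¹ • (ζ1 • v), hmem'⟩ : F) = ζ1 ^ p • (f ⟨‖v‖⁻¹ • v, hmem⟩ : F) := by
      apply hfe
      show ‖ζ1 • v‖⁻¹ • (ζ1 • v) = ζ1 • (‖v‖⁻¹ • v)
      rw [hnv, smul_comm]
    rw [coneMap, coneMap, dif_neg hsv, dif_neg h]
    rw [key, hnv, smul_comm]

section FinHelp
variable {p : ℕ} [NeZero p]

lemma fin_val_aux (a b : Fin p) : ((a - b : Fin p) : ℕ) = (a.val + (p - b.val)) % p := by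
  rw [Fin.sub_def]
  simp [Nat.add_comm]

lemma fin_val_aux2 (a b : Fin p) : ((a + b : Fin p) : ℕ) = (a.val + b.val) % p := by
  rw [Fin.add_def]

lemma fin_sub_one_val (j : Fin p) (h : j ≠ 0) : ((j - 1 : Fin p) : ℕ) = j.val - 1 := by
  have hj : j.val ≠ 0 := fun hc => h (Fin.ext (by simpa using hc))
  have hlt := j.isLt
  have hp1 : 1 < p := by omega
  have h1 : ((1 : Fin p) : ℕ) = 1 := (Fin.val_one' p).trans (Nat.mod_eq_of_lt hp1)
  rw [fin_val_aux, h1]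
  have : j.val + (p - 1) = p + (j.val - 1) := by omega
  rw [this, Nat.add_mod_left]
  exact Nat.mod_eq_of_lt (by omega)

lemma fin_zero_sub_one_val : ((0 - 1 : Fin p) : ℕ) = p - 1 := by
  rcases Nat.eq_or_lt_of_le (Nat.one_le_iff_ne_zero.mpr (NeZero.ne p)) with h2 | h2
  · have : p = 1 := h2.symm
    subst this
    simp
  · have h1 : ((1 : Fin p) : ℕ) = 1 := (Fin.val_one' p).trans (Nat.mod_eq_of_lt h2)
    rw [fin_val_aux, h1]
    simp only [Fin.val_zero, Nat.zero_add]
    exact Nat.mod_eq_of_lt (by omega)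

lemma fin_add_one_val (j : Fin p) (h : j + 1 ≠ 0) : ((j + 1 : Fin p) : ℕ) = j.val + 1 := by
  have hlt := j.isLt
  rcases Nat.eq_or_lt_of_le (Nat.one_le_iff_ne_zero.mpr (NeZero.ne p)) with h2 | h2
  · exfalso; apply h; have hq := h2.symm; subst hq; exact Subsingleton.elim _ _
  · have h1 : ((1 : Fin p) : ℕ) = 1 := (Fin.val_one' p).trans (Nat.mod_eq_of_lt h2)
    rcases Nat.eq_or_lt_of_le (Nat.succ_le_of_lt hlt) with h3 | h3
    · exfalso
      apply h
      apply Fin.ext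
      rw [fin_val_aux2, h1]
      simp [← h3]
    · rw [fin_val_aux2, h1]
      exact Nat.mod_eq_of_lt (by omega)

lemma fin_add_one_zero (j : Fin p) (h : j + 1 = 0) : j.val = p - 1 := by
  have hlt := j.isLt
  by_contra hc
  have : ((j + 1 : Fin p) : ℕ) = 0 := by rw [h]; simp
  rcases Nat.eq_or_lt_of_le (Nat.one_le_iff_ne_zero.mpr (NeZero.ne p)) with h2 | h2
  · omega
  · have h1 : ((1 : Fin p) : ℕ) = 1 := (Fin.val_one' p).trans (Nat.mod_eq_of_lt h2)
    rw [fin_val_aux2, h1, Nat.mod_eq_of_lt (by omega)] at this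
    omega

end FinHelp



def aExp (p k : ℕ) (m : Fin p) : ℕ := 1 + m.val * p^(k+1)
def bExp (p k : ℕ) (m : Fin p) : ℕ := p + m.val * p^(k+1)
def dExp (p k : ℕ) (m : Fin p) : ℕ := (1 + m.val * p^k) ^ ((p^(k+1)).totient - 1)

noncomputable def Pmap (p k r : ℕ) (w : EuclideanSpace ℂ (Fin p × Fin r)) :
    EuclideanSpace ℂ (Fin p × Fin r) :=
  WithLp.toLp 2 (fun mi : Fin p × Fin r => w mi ^ aExp p k mi.1)

noncomputable def Tmap (p k r : ℕ) (c : EuclideanSpace ℂ (Fin p × Fin r)) :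
    EuclideanSpace ℂ (Fin p × Fin r) :=
  WithLp.toLp 2 (fun ji : Fin p × Fin r =>
    ∑ m : Fin p, zetaPow p (k+2) ^ (aExp p k m * (p - 1 - ji.1.val)) * c (m, ji.2))

noncomputable def Smap (p k s : ℕ) (x : EuclideanSpace ℂ (Fin p × Fin s)) :
    EuclideanSpace ℂ (Fin p × Fin s) :=
  WithLp.toLp 2 (fun ml : Fin p × Fin s =>
    ∑ j : Fin p, zetaPow p (k+2) ^ (bExp p k ml.1 * j.val) * x (j, ml.2))

noncomputable def Qmap (p k s : ℕ) (x : EuclideanSpace ℂ (Fin p × Fin s)) :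
    EuclideanSpace ℂ (Fin p × Fin s) :=
  WithLp.toLp 2 (fun ml : Fin p × Fin s => x ml ^ dExp p k ml.1)

lemma Pmap_continuous (p k r : ℕ) : Continuous (Pmap p k r) := by
  apply (PiLp.continuous_toLp 2 _).comp
  apply continuous_pi
  intro mi
  exact (PiLp.continuous_apply _ _ mi).pow _

lemma Tmap_continuous (p k r : ℕ) : Continuous (Tmap p k r) := by
  apply (PiLp.continuous_toLp 2 _).comp
  apply continuous_pi
  intro ji
  exact continuous_finset_sum _ fun m _ => continuous_const.mul (PiLp.continuous_apply _ _ (m, ji.2))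

lemma Smap_continuous (p k s : ℕ) : Continuous (Smap p k s) := by
  apply (PiLp.continuous_toLp 2 _).comp
  apply continuous_pi
  intro ml
  exact continuous_finset_sum _ fun j _ => continuous_const.mul (PiLp.continuous_apply _ _ (j, ml.2))

lemma Qmap_continuous (p k s : ℕ) : Continuous (Qmap p k s) := by
  apply (PiLp.continuous_toLp 2 _).comp
  apply continuous_pi
  intro ml
  exact (PiLp.continuous_apply _ _ ml).pow _




variable {E F : Type*} [NormedAddCommGroup E] [NormedSpace ℂ E]
  [NormedAddCommGroup F] [NormedSpace ℂ F]

noncomputable def Fmap (p r s : ℕ)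
    (f : sphere (0 : EuclideanSpace ℂ (Fin r)) 1 → sphere (0 : EuclideanSpace ℂ (Fin s)) 1)
    (u : EuclideanSpace ℂ (Fin p × Fin r)) : EuclideanSpace ℂ (Fin p × Fin s) :=
  WithLp.toLp 2 (fun jl : Fin p × Fin s =>
    coneMap f (WithLp.toLp 2 (fun i => u (jl.1, i)) : EuclideanSpace ℂ (Fin r)) jl.2)

noncomputable def shift (p n : ℕ) [NeZero p] (lam : ℂ)
    (u : EuclideanSpace ℂ (Fin p × Fin n)) : EuclideanSpace ℂ (Fin p × Fin n) :=
  WithLp.toLp 2 (fun ji : Fin p × Fin n => (if ji.1 = 0 then lam else 1) * u (ji.1 - 1, ji.2))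

lemma Fmap_continuous (p r s : ℕ)
    (f : sphere (0 : EuclideanSpace ℂ (Fin r)) 1 → sphere (0 : EuclideanSpace ℂ (Fin s)) 1)
    (hf : Continuous f) (hcone : Continuous (coneMap f)) : Continuous (Fmap p r s f) := by
  apply (PiLp.continuous_toLp 2 _).comp
  apply continuous_pi
  intro jl
  have hblock : Continuous fun u : EuclideanSpace ℂ (Fin p × Fin r) =>
      (WithLp.toLp 2 (fun i => u (jl.1, i)) : EuclideanSpace ℂ (Fin r)) :=
    (PiLp.continuous_toLp 2 _).comp (continuous_pi fun i => PiLp.continuous_apply _ _ (jl.1, i))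
  exact (PiLp.continuous_apply _ _ jl.2).comp (hcone.comp hblock)


section Main

variable {p k r s : ℕ}

lemma zeta_pow_aexp_mul_p (hp : 0 < p) (k : ℕ) (m : Fin p) :
    zetaPow p (k+2) ^ (aExp p k m * p) = zetaPow p (k+1) := by
  have h : aExp p k m * p = p + m.val * p^(k+2) := by unfold aExp; ring
  rw [h, pow_add, mul_comm (m.val) (p^(k+2)), pow_mul, zeta_pow_ord p (k+2) hp, one_pow, mul_one]
  exact zeta_pow_succ p (k+1) hp

lemma zeta_pow_bexp_mul_p (hp : 0 < p) (k : ℕ) (m : Fin p) :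
    zetaPow p (k+2) ^ (bExp p k m * p) = zetaPow p (k+1) ^ p := by
  have h : bExp p k m * p = p * p + m.val * p^(k+2) := by unfold bExp; ring
  rw [h, pow_add, mul_comm (m.val) (p^(k+2)), pow_mul, pow_mul, zeta_pow_ord p (k+2) hp,
    one_pow, mul_one, zeta_pow_succ p (k+1) hp]

lemma zeta_pow_bexp_mul_d (hp : p.Prime) (hk : 1 ≤ k) (m : Fin p) :
    zetaPow p (k+2) ^ (bExp p k m * dExp p k m) = zetaPow p (k+1) := by
  have hp0 : 0 < p := hp.pos
  set e := 1 + m.val * p^k with he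
  have hbe : bExp p k m = p * e := by unfold bExp; rw [he, pow_succ]; ring
  have hnd : ¬ p ∣ e := by
    intro hdvd
    have h1 : p ∣ m.val * p^k := Dvd.dvd.mul_left (dvd_pow_self p (by omega)) m.val
    have : p ∣ 1 := (Nat.dvd_add_right h1).mp (by rwa [he, Nat.add_comm] at hdvd)
    have := Nat.le_of_dvd one_pos this
    have := hp.two_le
    omega
  have hco : Nat.Coprime e (p^(k+1)) :=
    Nat.Coprime.pow_right _ ((hp.coprime_iff_not_dvd.mpr hnd).symm)
  have htpos : 0 < (p^(k+1)).totient := Nat.totient_pos.mpr (Nat.pow_pos hp0)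
  have h1 : e * dExp p k m = e ^ (p^(k+1)).totient := by
    unfold dExp
    rw [← he, ← pow_succ']
    congr 1
    omega
  have hmod : e * dExp p k m ≡ 1 [MOD p^(k+1)] := by
    rw [h1]; exact Nat.ModEq.pow_totient hco
  have hmod2 : p * (e * dExp p k m) ≡ p * 1 [MOD p * p^(k+1)] := hmod.mul_left' p
  have hord : zetaPow p (k+2) ^ (p^(k+2)) = 1 := zeta_pow_ord p (k+2) hp0
  have hexp : bExp p k m * dExp p k m = p * (e * dExp p k m) := by rw [hbe]; ring
  have hmodfin : bExp p k m * dExp p k m ≡ p [MOD p^(k+2)] := by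
    rw [hexp]
    have : p * p^(k+1) = p^(k+2) := by rw [← pow_succ']
    rw [← this]
    simpa using hmod2
  rw [pow_congr_mod hord hmodfin]
  exact zeta_pow_succ p (k+1) hp0

lemma Pmap_equiv (w : EuclideanSpace ℂ (Fin p × Fin r)) :
    Pmap p k r (zetaPow p (k+2) • w) =
      WithLp.toLp 2 (fun mi => zetaPow p (k+2) ^ aExp p k mi.1 * Pmap p k r w mi) := by
  ext mi
  simp only [Pmap, PiLp.smul_apply, smul_eq_mul, mul_pow]

lemma Qmap_equiv (hp : p.Prime) (hk : 1 ≤ k) (x : EuclideanSpace ℂ (Fin p × Fin s)) :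
    Qmap p k s (WithLp.toLp 2 (fun ml => zetaPow p (k+2) ^ bExp p k ml.1 * x ml)) =
      zetaPow p (k+1) • Qmap p k s x := by
  ext ml
  simp only [Qmap, PiLp.smul_apply, smul_eq_mul, mul_pow, ← pow_mul]
  rw [zeta_pow_bexp_mul_d hp hk ml.1]

lemma Tmap_equiv [NeZero p] (hp : 0 < p) (c : EuclideanSpace ℂ (Fin p × Fin r)) :
    Tmap p k r (WithLp.toLp 2 (fun mi => zetaPow p (k+2) ^ aExp p k mi.1 * c mi)) =
      shift p r (zetaPow p (k+1)) (Tmap p k r c) := by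
  ext ji
  obtain ⟨j, i⟩ := ji
  simp only [Tmap, shift]
  by_cases hj : j = 0
  · subst hj
    simp only [if_pos rfl]
    rw [mul_sum]
    apply Finset.sum_congr rfl
    intro m _
    rw [fin_zero_sub_one_val, Nat.sub_self, Nat.mul_zero, pow_zero, one_mul]
    rw [← mul_assoc, ← pow_add, Fin.val_zero, Nat.sub_zero, ← Nat.mul_succ,
      Nat.succ_eq_add_one, Nat.sub_add_cancel hp, zeta_pow_aexp_mul_p hp]
    simp
  · simp only [if_neg hj, one_mul]
    apply Finset.sum_congr rfl
    intro m _
    rw [fin_sub_one_val j hj, ← mul_assoc, ← pow_add]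
    congr 2
    have h1 : 1 ≤ j.val := Nat.one_le_iff_ne_zero.mpr
      (fun hc => hj (Fin.ext (by simpa using hc)))
    have h2 := j.isLt
    have h3 : p - 1 - (j.val - 1) = (p - 1 - j.val) + 1 := by omega
    rw [h3, Nat.mul_succ]

end Main

section Main2

variable {p k r s : ℕ}

lemma Fmap_equiv [NeZero p]
    (f : sphere (0 : EuclideanSpace ℂ (Fin r)) 1 → sphere (0 : EuclideanSpace ℂ (Fin s)) 1)
    (hfe : ∀ v w : sphere (0 : EuclideanSpace ℂ (Fin r)) 1,
      (w : EuclideanSpace ℂ (Fin r)) = zetaPow p (k+1) • (v : EuclideanSpace ℂ (Fin r)) →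
      (f w : EuclideanSpace ℂ (Fin s)) = zetaPow p (k+1) ^ p • (f v : EuclideanSpace ℂ (Fin s)))
    (u : EuclideanSpace ℂ (Fin p × Fin r)) :
    Fmap p r s f (shift p r (zetaPow p (k+1)) u) =
      shift p s (zetaPow p (k+1) ^ p) (Fmap p r s f u) := by
  ext jl
  obtain ⟨j, l⟩ := jl
  simp only [Fmap, shift]
  by_cases hj : j = 0
  · subst hj
    simp only [if_pos rfl, if_true]
    have hblk : (WithLp.toLp 2 (fun i => zetaPow p (k+1) * u (0 - 1, i))
        : EuclideanSpace ℂ (Fin r)) =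
        zetaPow p (k+1) • (WithLp.toLp 2 (fun i => u (0 - 1, i)) : EuclideanSpace ℂ (Fin r)) := by
      ext i
      simp [PiLp.smul_apply]
    rw [hblk, coneMap_equivariant (p := p) (zetaPow p (k+1)) (norm_zeta p (k+1)) f hfe]
    simp [PiLp.smul_apply]
  · simp only [if_neg hj, one_mul]

lemma Smap_equiv [NeZero p] (hp : 0 < p) (x : EuclideanSpace ℂ (Fin p × Fin s)) :
    Smap p k s (shift p s (zetaPow p (k+1) ^ p) x) =
      WithLp.toLp 2 (fun ml => zetaPow p (k+2) ^ bExp p k ml.1 * Smap p k s x ml) := by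
  ext ml
  obtain ⟨m, l⟩ := ml
  simp only [Smap, shift]
  rw [show (∑ j : Fin p, zetaPow p (k+2) ^ (bExp p k m * j.val) *
      ((if j = 0 then zetaPow p (k+1) ^ p else 1) * x (j - 1, l))) =
      (∑ j : Fin p, zetaPow p (k+2) ^ (bExp p k m * ((j+1 : Fin p)).val) *
      ((if j + 1 = 0 then zetaPow p (k+1) ^ p else 1) * x ((j + 1) - 1, l))) from
    (Fintype.sum_equiv (Equiv.addRight (1 : Fin p)) _ _ (fun j => rfl)).symm]
  rw [mul_sum]
  apply Finset.sum_congr rfl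
  intro j _
  rw [add_sub_cancel_right]
  by_cases hj : j + 1 = 0
  · rw [if_pos hj, hj]
    have hjv : j.val = p - 1 := fin_add_one_zero j hj
    simp only [Fin.val_zero, Nat.mul_zero, pow_zero, one_mul]
    rw [← mul_assoc, ← pow_add, hjv, add_comm (bExp p k m), ← Nat.mul_succ,
      Nat.succ_eq_add_one, Nat.sub_add_cancel hp, zeta_pow_bexp_mul_p hp]
  · rw [if_neg hj, one_mul, fin_add_one_val j hj, Nat.mul_succ, pow_add]
    ring

end Main2

section Inj

variable {p k r s : ℕ}

lemma fin_not_dvd (hp : 0 < p) {m m' : Fin p} (hne : m ≠ m') :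
    ¬ ((p : ℤ) ∣ ((m.val : ℤ) - (m'.val : ℤ))) := by
  intro hdvd
  have h1 := m.isLt
  have h2 := m'.isLt
  have habs : |((m.val : ℤ) - (m'.val : ℤ))| < p := by
    rw [abs_lt]; constructor <;> omega
  have := Int.eq_zero_of_abs_lt_dvd hdvd habs
  apply hne
  apply Fin.ext
  omega

lemma orth_sum (hp : 0 < p) (k : ℕ) {m m' : Fin p}
    (D : ℤ) (hD : D = ((p^(k+1) : ℕ) : ℤ) * ((m.val : ℤ) - (m'.val : ℤ))) :
    ∑ j : Fin p, zetaPow p (k+2) ^ (D * (j.val : ℤ)) =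
      (if m = m' then (p : ℂ) else 0) := by
  have hζ0 : zetaPow p (k+2) ≠ 0 := zeta_ne_zero p (k+2)
  by_cases hmm : m = m'
  · subst hmm
    simp only [sub_self, mul_zero] at hD
    simp [hD, if_pos rfl, Finset.card_univ]
  · rw [if_neg hmm]
    have hmu := mu_primitive p k hp
    set μ := zetaPow p (k+2) ^ (p^(k+1)) with hμ
    have hterm : ∀ j : Fin p, zetaPow p (k+2) ^ (D * (j.val : ℤ)) =
        (μ ^ ((m.val : ℤ) - (m'.val : ℤ))) ^ (j.val : ℕ) := by
      intro j
      rw [hD, mul_assoc, zpow_mul, zpow_natCast, zpow_mul, zpow_natCast]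
    simp only [hterm]
    exact mu_sum hp hmu (fin_not_dvd hp hmm)

lemma Tmap_inj (hp : 0 < p) (c : EuclideanSpace ℂ (Fin p × Fin r))
    (h : Tmap p k r c = 0) : c = 0 := by
  have hζ0 : zetaPow p (k+2) ≠ 0 := zeta_ne_zero p (k+2)
  have hpC : (p : ℂ) ≠ 0 := Nat.cast_ne_zero.mpr hp.ne'
  have key : ∀ (m' : Fin p) (i : Fin r), (p : ℂ) * c (m', i) = 0 := by
    intro m' i
    have hTj : ∀ j : Fin p, Tmap p k r c (j, i) = 0 := by
      intro j; rw [h]; rfl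
    have e1 : ∑ j : Fin p,
        zetaPow p (k+2) ^ (-((aExp p k m' * (p - 1 - j.val) : ℕ) : ℤ)) * Tmap p k r c (j, i)
        = 0 := by
      apply Finset.sum_eq_zero
      intro j _
      rw [hTj j, mul_zero]
    rw [← e1]
    have e2 : ∀ j : Fin p,
        zetaPow p (k+2) ^ (-((aExp p k m' * (p - 1 - j.val) : ℕ) : ℤ)) * Tmap p k r c (j, i)
        = ∑ m : Fin p, zetaPow p (k+2) ^
            ((((aExp p k m : ℕ) : ℤ) - ((aExp p k m' : ℕ) : ℤ)) * ((p - 1 - j.val : ℕ) : ℤ))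
            * c (m, i) := by
      intro j
      rw [Tmap, mul_sum]
      apply Finset.sum_congr rfl
      intro m _
      rw [← mul_assoc]
      congr 1
      rw [← zpow_natCast (zetaPow p (k+2)) (aExp p k m * (p - 1 - j.val)), ← zpow_add₀ hζ0]
      congr 1
      push_cast
      ring
    simp only [e2]
    rw [Finset.sum_comm]
    have e3 : ∀ m : Fin p,
        (∑ j : Fin p, zetaPow p (k+2) ^
            ((((aExp p k m : ℕ) : ℤ) - ((aExp p k m' : ℕ) : ℤ)) * ((p - 1 - j.val : ℕ) : ℤ))
            * c (m, i))
        = (if m = m' then (p : ℂ) else 0) * c (m, i) := by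
      intro m
      rw [← Finset.sum_mul]
      congr 1
      have hD : (((aExp p k m : ℕ) : ℤ) - ((aExp p k m' : ℕ) : ℤ))
          = ((p^(k+1) : ℕ) : ℤ) * ((m.val : ℤ) - (m'.val : ℤ)) := by
        unfold aExp; push_cast; ring
      have hrev : ∀ j : Fin p, ((p - 1 - j.val : ℕ) : ℤ) = ((Fin.rev j).val : ℤ) := by
        intro j; rw [Fin.val_rev]; congr 1; omega
      calc ∑ j : Fin p, zetaPow p (k+2) ^
            ((((aExp p k m : ℕ) : ℤ) - ((aExp p k m' : ℕ) : ℤ)) * ((p - 1 - j.val : ℕ) : ℤ))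
          = ∑ j : Fin p, zetaPow p (k+2) ^
            ((((aExp p k m : ℕ) : ℤ) - ((aExp p k m' : ℕ) : ℤ)) * ((Fin.rev j).val : ℤ)) := by
            apply Finset.sum_congr rfl
            intro j _
            rw [hrev j]
        _ = ∑ j : Fin p, zetaPow p (k+2) ^
            ((((aExp p k m : ℕ) : ℤ) - ((aExp p k m' : ℕ) : ℤ)) * ((j.val : ℕ) : ℤ)) :=
            Fintype.sum_equiv Fin.revPerm _ _ (fun j => rfl)
        _ = (if m = m' then (p : ℂ) else 0) := orth_sum hp k _ hD
    simp only [e3]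
    simp only [ite_mul, zero_mul]
    rw [Finset.sum_ite_eq' Finset.univ m' (fun m => (p : ℂ) * c (m, i))]
    simp
  ext x
  obtain ⟨m', i⟩ := x
  have := key m' i
  have hc := (mul_eq_zero.mp this).resolve_left hpC
  exact hc

end Inj

section Inj2

variable {p k r s : ℕ}

lemma orth_sum' (hp : 0 < p) (k : ℕ) {j j' : Fin p} :
    ∑ m : Fin p, zetaPow p (k+2) ^ (((bExp p k m : ℕ) : ℤ) * ((j.val : ℤ) - (j'.val : ℤ)))
      = if j = j' then (p : ℂ) else 0 := by
  have hζ0 : zetaPow p (k+2) ≠ 0 := zeta_ne_zero p (k+2)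
  by_cases hjj : j = j'
  · subst hjj
    simp [Finset.card_univ]
  · rw [if_neg hjj]
    set μ := zetaPow p (k+2) ^ (p^(k+1)) with hμ
    have hterm : ∀ m : Fin p,
        zetaPow p (k+2) ^ (((bExp p k m : ℕ) : ℤ) * ((j.val : ℤ) - (j'.val : ℤ)))
        = zetaPow p (k+2) ^ ((p : ℤ) * ((j.val : ℤ) - (j'.val : ℤ)))
          * (μ ^ ((j.val : ℤ) - (j'.val : ℤ))) ^ (m.val : ℕ) := by
      intro m
      have h1 : ((bExp p k m : ℕ) : ℤ) * ((j.val : ℤ) - (j'.val : ℤ))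
          = (p : ℤ) * ((j.val : ℤ) - (j'.val : ℤ))
            + ((p^(k+1) : ℕ) : ℤ) * (((j.val : ℤ) - (j'.val : ℤ)) * (m.val : ℤ)) := by
        unfold bExp; push_cast; ring
      rw [h1, zpow_add₀ hζ0]
      congr 1
      rw [zpow_mul, zpow_natCast, zpow_mul, zpow_natCast]
    simp only [hterm]
    rw [← Finset.mul_sum, mu_sum hp (mu_primitive p k hp) (fin_not_dvd hp hjj), mul_zero]

lemma Smap_inj (hp : 0 < p) (x : EuclideanSpace ℂ (Fin p × Fin s))
    (h : Smap p k s x = 0) : x = 0 := by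
  have hζ0 : zetaPow p (k+2) ≠ 0 := zeta_ne_zero p (k+2)
  have hpC : (p : ℂ) ≠ 0 := Nat.cast_ne_zero.mpr hp.ne'
  have key : ∀ (j' : Fin p) (l : Fin s), (p : ℂ) * x (j', l) = 0 := by
    intro j' l
    have hSm : ∀ m : Fin p, Smap p k s x (m, l) = 0 := by
      intro m; rw [h]; rfl
    have e1 : ∑ m : Fin p,
        zetaPow p (k+2) ^ (-((bExp p k m * j'.val : ℕ) : ℤ)) * Smap p k s x (m, l) = 0 := by
      apply Finset.sum_eq_zero
      intro m _
      rw [hSm m, mul_zero]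
    rw [← e1]
    have e2 : ∀ m : Fin p,
        zetaPow p (k+2) ^ (-((bExp p k m * j'.val : ℕ) : ℤ)) * Smap p k s x (m, l)
        = ∑ j : Fin p, zetaPow p (k+2) ^
            (((bExp p k m : ℕ) : ℤ) * ((j.val : ℤ) - (j'.val : ℤ))) * x (j, l) := by
      intro m
      rw [Smap, mul_sum]
      apply Finset.sum_congr rfl
      intro j _
      rw [← mul_assoc]
      congr 1
      rw [← zpow_natCast (zetaPow p (k+2)) (bExp p k m * j.val), ← zpow_add₀ hζ0]
      congr 1
      push_cast
      ring
    simp only [e2]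
    rw [Finset.sum_comm]
    have e3 : ∀ j : Fin p,
        (∑ m : Fin p, zetaPow p (k+2) ^
            (((bExp p k m : ℕ) : ℤ) * ((j.val : ℤ) - (j'.val : ℤ))) * x (j, l))
        = (if j = j' then (p : ℂ) else 0) * x (j, l) := by
      intro j
      rw [← Finset.sum_mul]
      congr 1
      exact orth_sum' hp k
    simp only [e3]
    simp only [ite_mul, zero_mul]
    rw [Finset.sum_ite_eq' Finset.univ j' (fun j => (p : ℂ) * x (j, l))]
    simp
  ext y
  obtain ⟨j', l⟩ := y
  have := key j' l
  exact (mul_eq_zero.mp this).resolve_left hpC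

end Inj2

section NeZeroLemmas

variable {p k r s : ℕ}

lemma pi_eq_zero_iff {ι : Type*} [Fintype ι] (x : EuclideanSpace ℂ ι) :
    x = 0 ↔ ∀ i, x i = 0 := by
  constructor
  · intro h i; rw [h]; rfl
  · intro h; ext i; exact h i

lemma Pmap_ne_zero {w : EuclideanSpace ℂ (Fin p × Fin r)} (hw : w ≠ 0) :
    Pmap p k r w ≠ 0 := by
  intro h
  apply hw
  rw [pi_eq_zero_iff] at h ⊢
  intro mi
  have := h mi
  rw [Pmap] at this
  exact (pow_eq_zero_iff'.mp this).1
  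
lemma Qmap_ne_zero {x : EuclideanSpace ℂ (Fin p × Fin s)} (hx : x ≠ 0) :
    Qmap p k s x ≠ 0 := by
  intro h
  apply hx
  rw [pi_eq_zero_iff] at h ⊢
  intro ml
  have := h ml
  rw [Qmap] at this
  exact (pow_eq_zero_iff'.mp this).1

lemma Fmap_ne_zero
    (f : sphere (0 : EuclideanSpace ℂ (Fin r)) 1 → sphere (0 : EuclideanSpace ℂ (Fin s)) 1)
    {u : EuclideanSpace ℂ (Fin p × Fin r)} (hu : u ≠ 0) : Fmap p r s f u ≠ 0 := by
  intro h
  apply hu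
  rw [pi_eq_zero_iff] at h ⊢
  intro mi
  obtain ⟨m, i⟩ := mi
  have hblk : coneMap f (WithLp.toLp 2 (fun i => u (m, i)) : EuclideanSpace ℂ (Fin r)) = 0 := by
    rw [pi_eq_zero_iff]
    intro l
    exact h (m, l)
  have := (coneMap_eq_zero_iff f _).mp hblk
  have h2 : (WithLp.toLp 2 (fun i => u (m, i)) : EuclideanSpace ℂ (Fin r)) i = 0 := by rw [this]; rfl
  exact h2

end NeZeroLemmas

section Assemble

variable (p k r s : ℕ)

noncomputable def g0
    (f : sphere (0 : EuclideanSpace ℂ (Fin r)) 1 → sphere (0 : EuclideanSpace ℂ (Fin s)) 1)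
    (w : EuclideanSpace ℂ (Fin (p * r))) : EuclideanSpace ℂ (Fin (p * s)) :=
  (LinearIsometryEquiv.piLpCongrLeft 2 ℂ ℂ (finProdFinEquiv : Fin p × Fin s ≃ Fin (p * s)))
    (Qmap p k s (Smap p k s (Fmap p r s f (Tmap p k r (Pmap p k r
      ((LinearIsometryEquiv.piLpCongrLeft 2 ℂ ℂ
        (finProdFinEquiv : Fin p × Fin r ≃ Fin (p * r)).symm) w))))))

lemma g0_cont
    (f : sphere (0 : EuclideanSpace ℂ (Fin r)) 1 → sphere (0 : EuclideanSpace ℂ (Fin s)) 1)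
    (hf : Continuous f) : Continuous (g0 p k r s f) := by
  exact (LinearIsometryEquiv.continuous _).comp ((Qmap_continuous p k s).comp
    ((Smap_continuous p k s).comp ((Fmap_continuous p r s f hf
      (coneMap_continuous f hf)).comp ((Tmap_continuous p k r).comp
        ((Pmap_continuous p k r).comp (LinearIsometryEquiv.continuous _))))))

lemma g0_ne_zero (hp : 0 < p)
    (f : sphere (0 : EuclideanSpace ℂ (Fin r)) 1 → sphere (0 : EuclideanSpace ℂ (Fin s)) 1)
    {w : EuclideanSpace ℂ (Fin (p * r))} (hw : w ≠ 0) : g0 p k r s f w ≠ 0 := by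
  have h1 : (LinearIsometryEquiv.piLpCongrLeft 2 ℂ ℂ
      (finProdFinEquiv : Fin p × Fin r ≃ Fin (p * r)).symm) w ≠ 0 := by
    rw [Ne, LinearIsometryEquiv.map_eq_zero_iff]
    exact hw
  have h2 := Pmap_ne_zero (k := k) h1
  have h3 : Tmap p k r (Pmap p k r _) ≠ 0 := fun h => h2 (Tmap_inj hp _ h)
  have h4 := Fmap_ne_zero f h3
  have h5 : Smap p k s (Fmap p r s f _) ≠ 0 := fun h => h4 (Smap_inj hp _ h)
  have h6 := Qmap_ne_zero (k := k) h5
  rw [g0, Ne, LinearIsometryEquiv.map_eq_zero_iff]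
  exact h6

lemma g0_equiv [NeZero p] (hp : p.Prime) (hk : 1 ≤ k)
    (f : sphere (0 : EuclideanSpace ℂ (Fin r)) 1 → sphere (0 : EuclideanSpace ℂ (Fin s)) 1)
    (hfe : ∀ v w : sphere (0 : EuclideanSpace ℂ (Fin r)) 1,
      (w : EuclideanSpace ℂ (Fin r)) = zetaPow p (k+1) • (v : EuclideanSpace ℂ (Fin r)) →
      (f w : EuclideanSpace ℂ (Fin s)) = zetaPow p (k+1) ^ p • (f v : EuclideanSpace ℂ (Fin s)))
    (w : EuclideanSpace ℂ (Fin (p * r))) :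
    g0 p k r s f (zetaPow p (k+2) • w) = zetaPow p (k+1) • g0 p k r s f w := by
  unfold g0
  rw [map_smul, Pmap_equiv, Tmap_equiv hp.pos, Fmap_equiv f hfe, Smap_equiv hp.pos,
    Qmap_equiv hp hk, map_smul]

end Assemble

end S9

/-- Lemma 6.2: if for `k ≥ 1`, `r, s ≥ 1` there is a continuous
`f : S(ℂ^r) → S(ℂ^s)` with `f(ζ_{k+1} • v) = ζ_{k+1}^p • f(v)` (a `ℤ/p^{k+1}`-equivariant map
`S(rL) → S(sL^{⊗p})`), then there is a continuous `g : S(ℂ^{pr}) → S(ℂ^{ps})` with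
`g(ζ_{k+2} • w) = ζ_{k+2}^p • g(w)`. -/
theorem stmt9 (p : ℕ) (hp : p.Prime) (k r s : ℕ) (hk : 1 ≤ k) (hr : 1 ≤ r) (hs : 1 ≤ s)
    (f : sphere (0 : EuclideanSpace ℂ (Fin r)) 1 → sphere (0 : EuclideanSpace ℂ (Fin s)) 1)
    (hf : Continuous f)
    (hfequiv : ∀ v w : sphere (0 : EuclideanSpace ℂ (Fin r)) 1,
      (w : EuclideanSpace ℂ (Fin r)) = zetaPow p (k + 1) • (v : EuclideanSpace ℂ (Fin r)) →
      (f w : EuclideanSpace ℂ (Fin s)) =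
        zetaPow p (k + 1) ^ p • (f v : EuclideanSpace ℂ (Fin s))) :
    ∃ g : sphere (0 : EuclideanSpace ℂ (Fin (p * r))) 1 →
        sphere (0 : EuclideanSpace ℂ (Fin (p * s))) 1,
      Continuous g ∧
        ∀ v w : sphere (0 : EuclideanSpace ℂ (Fin (p * r))) 1,
          (w : EuclideanSpace ℂ (Fin (p * r))) =
            zetaPow p (k + 2) • (v : EuclideanSpace ℂ (Fin (p * r))) →
          (g w : EuclideanSpace ℂ (Fin (p * s))) =
            zetaPow p (k + 2) ^ p • (g v : EuclideanSpace ℂ (Fin (p * s))) := by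
  haveI : NeZero p := ⟨hp.pos.ne'⟩
  have hζ1p : zetaPow p (k+2) ^ p = zetaPow p (k+1) := S9.zeta_pow_succ p (k+1) hp.pos
  have hval_ne : ∀ w : sphere (0 : EuclideanSpace ℂ (Fin (p * r))) 1,
      (w : EuclideanSpace ℂ (Fin (p * r))) ≠ 0 := by
    intro w
    have := mem_sphere_zero_iff_norm.mp w.2
    exact norm_ne_zero_iff.mp (by rw [this]; norm_num)
  have hg0ne : ∀ w : sphere (0 : EuclideanSpace ℂ (Fin (p * r))) 1,
      S9.g0 p k r s f (w : EuclideanSpace ℂ (Fin (p * r))) ≠ 0 :=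
    fun w => S9.g0_ne_zero p k r s hp.pos f (hval_ne w)
  refine ⟨fun w => ⟨‖S9.g0 p k r s f (w : EuclideanSpace ℂ (Fin (p * r)))‖⁻¹ •
      S9.g0 p k r s f (w : EuclideanSpace ℂ (Fin (p * r))), by
        simp [mem_sphere_zero_iff_norm, norm_smul,
          inv_mul_cancel₀ (norm_ne_zero_iff.mpr (hg0ne w))]⟩, ?_, ?_⟩
  · apply Continuous.subtype_mk
    have hc : Continuous fun w : sphere (0 : EuclideanSpace ℂ (Fin (p * r))) 1 =>
        S9.g0 p k r s f (w : EuclideanSpace ℂ (Fin (p * r))) :=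
      (S9.g0_cont p k r s f hf).comp continuous_subtype_val
    exact (hc.norm.inv₀ fun w => norm_ne_zero_iff.mpr (hg0ne w)).smul hc
  · intro v w hvw
    show ‖S9.g0 p k r s f (w : EuclideanSpace ℂ (Fin (p * r)))‖⁻¹ •
        S9.g0 p k r s f (w : EuclideanSpace ℂ (Fin (p * r))) = _
    rw [hvw, S9.g0_equiv p k r s hp hk f hfequiv, hζ1p]
    rw [norm_smul, S9.norm_zeta, one_mul, smul_comm]
end
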